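/- arXiv:0810.4907 — 4 statements merged into one kernel-verified Lean document; each statement's English description precedes it below -/
import Mathlib

section
/- (Univariate Newton–Puiseux with principal terms.) Let f̃(x) = Σ_{i=0}^m ã_i x^i ∈ K[x] be a nonzero polynomial over the field K of Puiseux series over ℂ. Let r ∈ ℚ be such that min_i {o(ã_i) + i·r} is attained for at least two indices, and let γ ∈ ℂ* be a root of the initial form f̃_r(x) = Σ_{i : o(ã_i)+i·r minimal} pc(ã_i) x^i. Then there exists x̃ ∈ K* with f̃(x̃) = 0, o(x̃) = r, and pc(x̃) = γ. -/
noncomputable section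

/-- The field of (generalized) Puiseux series over `ℂ`, modeled as Hahn series
with value group `ℚ` and coefficients in `ℂ`. -/
abbrev K : Type := HahnSeries ℚ ℂ

/-- The principal coefficient of a Puiseux series. -/
def pc (a : K) : ℂ := a.coeff a.order

/-- The weight of index `i` of the univariate polynomial `f` at `r`:
`o(a_i) + i·r`. -/
def wtP (f : Polynomial K) (r : ℚ) (i : ℕ) : ℚ :=
  (f.coeff i).order + (i : ℚ) * r

/-- The tropicalization `f(r) = min_i (o(a_i) + i·r)`. -/
def tropP (f : Polynomial K) (r : ℚ) : WithTop ℚ :=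
  f.support.inf fun i => (wtP f r i : WithTop ℚ)

/-- The initial form `f̃_r ∈ ℂ[x]`. -/
def initFormP (f : Polynomial K) (r : ℚ) : Polynomial ℂ :=
  ∑ i ∈ f.support.filter fun i => (wtP f r i : WithTop ℚ) = tropP f r,
    Polynomial.monomial i (pc (f.coeff i))

set_option linter.unusedVariables false
set_option linter.unusedSectionVars false

open Polynomial HahnSeries Classical

namespace NPaux

/-- coefficient extraction as an additive hom -/
def cf (q : ℚ) : K →+ ℂ where
  toFun s := s.coeff q
  map_zero' := rfl
  map_add' a b := rfl

@[simp] lemma cf_apply (q : ℚ) (s : K) : cf q s = s.coeff q := rfl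

lemma ne_zero_of_coeff (s : K) (q : ℚ) (h : s.coeff q ≠ 0) : s ≠ 0 := by
  rintro rfl; exact h rfl

lemma order_eq_of (s : K) (q : ℚ) (h1 : s.coeff q ≠ 0)
    (h2 : ∀ p, p < q → s.coeff p = 0) : s.order = q := by
  have hs : s ≠ 0 := ne_zero_of_coeff s q h1
  have hle : s.order ≤ q := HahnSeries.order_le_of_coeff_ne_zero h1
  rcases lt_or_eq_of_le hle with h | h
  · exact absurd (h2 _ h) ((HahnSeries.coeff_order_eq_zero.not.mpr hs))
  · exact h

lemma pc_ne_zero {s : K} (hs : s ≠ 0) : pc s ≠ 0 := HahnSeries.coeff_order_eq_zero.not.mpr hs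

lemma order_mul' {u v : K} (hu : u ≠ 0) (hv : v ≠ 0) :
    (u * v).order = u.order + v.order := HahnSeries.order_mul hu hv

lemma pc_eq_leadingCoeff {u : K} (hu : u ≠ 0) : pc u = u.leadingCoeff := by
  rw [HahnSeries.leadingCoeff_eq]
  rfl

lemma pc_mul {u v : K} (hu : u ≠ 0) (hv : v ≠ 0) : pc (u * v) = pc u * pc v := by
  unfold pc
  rw [order_mul' hu hv, HahnSeries.coeff_mul_order_add_order,
    ← pc_eq_leadingCoeff hu, ← pc_eq_leadingCoeff hv]
  rfl

lemma pc_pow {u : K} (hu : u ≠ 0) (n : ℕ) : pc (u ^ n) = (pc u) ^ n := by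
  induction n with
  | zero => simp [pc]
  | succ n ih =>
      rw [pow_succ, pc_mul (pow_ne_zero _ hu) hu, ih, pow_succ]

lemma order_pow' (u : K) (n : ℕ) : (u ^ n).order = (n : ℚ) * u.order := by
  rw [HahnSeries.order_pow]
  simp [nsmul_eq_mul]

lemma pc_single {q : ℚ} {c : ℂ} (hc : c ≠ 0) : pc (HahnSeries.single q c) = c := by
  unfold pc
  rw [HahnSeries.order_single hc, HahnSeries.coeff_single_same]

lemma natCast_order_pc (n : ℕ) (hn : n ≠ 0) :
    ((n : K) ≠ 0) ∧ (n : K).order = 0 ∧ pc (n : K) = (n : ℂ) := by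
  have h1 : (n : K) = HahnSeries.single (0 : ℚ) (n : ℂ) := by
    rw [← HahnSeries.C_apply, map_natCast]
  have hc : (n : ℂ) ≠ 0 := Nat.cast_ne_zero.mpr hn
  refine ⟨?_, ?_, ?_⟩
  · rw [h1]; exact HahnSeries.single_ne_zero hc
  · rw [h1]; exact HahnSeries.order_single hc
  · rw [h1]; exact pc_single hc

/-- Taylor coefficient expansion over any commutative ring. -/
lemma taylor_coeff_sum {A : Type*} [CommRing A] (P : Polynomial A) (z : A) (j : ℕ) :
    (Polynomial.taylor z P).coeff j
      = ∑ i ∈ P.support, P.coeff i * (z ^ (i - j) * (i.choose j : A)) := by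
  conv_lhs => rw [P.as_sum_support]
  rw [map_sum, Polynomial.finset_sum_coeff]
  refine Finset.sum_congr rfl fun i _ => ?_
  rw [Polynomial.taylor_monomial, Polynomial.coeff_C_mul, Polynomial.coeff_X_add_C_pow]

lemma taylor_coeff_sum' {A : Type*} [CommRing A] (P : Polynomial A) (z : A) (j : ℕ)
    (s : Finset ℕ) (hs : P.support ⊆ s) :
    (Polynomial.taylor z P).coeff j
      = ∑ i ∈ s, P.coeff i * (z ^ (i - j) * (i.choose j : A)) := by
  rw [taylor_coeff_sum]
  refine Finset.sum_subset hs fun i _ hi => ?_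
  rw [Polynomial.notMem_support_iff.mp hi, zero_mul]


/-- the set of indices attaining the minimal weight `W` -/
def mset (g : Polynomial K) (ρ W : ℚ) : Finset ℕ :=
  g.support.filter fun k => wtP g ρ k = W

section Core

variable {g : Polynomial K} {ρ W : ℚ} {z : K}

lemma term_facts (hz : z ≠ 0) (hzo : z.order = ρ) {i j : ℕ}
    (hg : g.coeff i ≠ 0) (hj : j ≤ i) :
    (g.coeff i * (z ^ (i - j) * (i.choose j : K)) ≠ 0) ∧
    (g.coeff i * (z ^ (i - j) * (i.choose j : K))).order = wtP g ρ i - j * ρ ∧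
    pc (g.coeff i * (z ^ (i - j) * (i.choose j : K)))
      = pc (g.coeff i) * ((pc z) ^ (i - j) * (i.choose j : ℂ)) := by
  have hch : i.choose j ≠ 0 := (Nat.choose_pos hj).ne'
  obtain ⟨hC0, hCo, hCpc⟩ := natCast_order_pc (i.choose j) hch
  have hzp : z ^ (i - j) ≠ 0 := pow_ne_zero _ hz
  have hmul0 : z ^ (i - j) * (i.choose j : K) ≠ 0 := mul_ne_zero hzp hC0
  have h0 : g.coeff i * (z ^ (i - j) * (i.choose j : K)) ≠ 0 := mul_ne_zero hg hmul0
  have hcast : ((i - j : ℕ) : ℚ) = (i : ℚ) - (j : ℚ) := by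
    push_cast [Nat.cast_sub hj]; ring
  have horder : (g.coeff i * (z ^ (i - j) * (i.choose j : K))).order
      = wtP g ρ i - j * ρ := by
    rw [order_mul' hg hmul0, order_mul' hzp hC0, order_pow', hzo, hCo, hcast, wtP]
    ring
  refine ⟨h0, horder, ?_⟩
  rw [pc_mul hg hmul0, pc_mul hzp hC0, pc_pow hz, hCpc]

lemma core_a (hz : z ≠ 0) (hzo : z.order = ρ)
    (hWlb : ∀ k ∈ g.support, W ≤ wtP g ρ k) (j : ℕ) (q : ℚ)
    (hq : q < W - j * ρ) : ((Polynomial.taylor z g).coeff j).coeff q = 0 := by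
  rw [taylor_coeff_sum, ← cf_apply, map_sum]
  refine Finset.sum_eq_zero fun i hi => ?_
  have hg : g.coeff i ≠ 0 := Polynomial.mem_support_iff.mp hi
  rcases le_or_gt j i with hj | hj
  · obtain ⟨h0, ho, _⟩ := term_facts hz hzo hg hj
    simp only [cf_apply]
    refine HahnSeries.coeff_eq_zero_of_lt_order ?_
    rw [ho]
    have := hWlb i hi
    linarith
  · simp [Nat.choose_eq_zero_of_lt hj]

lemma core_b (hz : z ≠ 0) (hzo : z.order = ρ)
    (hWlb : ∀ k ∈ g.support, W ≤ wtP g ρ k) (j : ℕ) :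
    ((Polynomial.taylor z g).coeff j).coeff (W - j * ρ)
      = ∑ i ∈ mset g ρ W, pc (g.coeff i) * ((pc z) ^ (i - j) * (i.choose j : ℂ)) := by
  rw [taylor_coeff_sum, ← cf_apply, map_sum, mset, Finset.sum_filter]
  refine Finset.sum_congr rfl fun i hi => ?_
  have hg : g.coeff i ≠ 0 := Polynomial.mem_support_iff.mp hi
  simp only [cf_apply]
  rcases le_or_gt j i with hj | hj
  · obtain ⟨h0, ho, hpc⟩ := term_facts hz hzo hg hj
    by_cases hw : wtP g ρ i = W
    · rw [if_pos hw]
      have : (g.coeff i * (z ^ (i - j) * (i.choose j : K))).order = W - j * ρ := by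
        rw [ho, hw]
      rw [← this, ← hpc]; rfl
    · rw [if_neg hw]
      refine HahnSeries.coeff_eq_zero_of_lt_order ?_
      rw [ho]
      have h1 := hWlb i hi
      have h2 : W < wtP g ρ i := lt_of_le_of_ne h1 (Ne.symm hw)
      linarith
  · rw [Nat.choose_eq_zero_of_lt hj]
    push_cast
    simp
end Core

lemma trop_le (g : Polynomial K) (ρ W : ℚ) (htrop : tropP g ρ = (W : WithTop ℚ)) :
    ∀ k ∈ g.support, W ≤ wtP g ρ k := by
  intro k hk
  have h := Finset.inf_le (f := fun i => ((wtP g ρ i : ℚ) : WithTop ℚ)) hk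
  rw [← tropP, htrop] at h
  exact_mod_cast h

lemma trop_eq (g : Polynomial K) (ρ W : ℚ)
    (hlb : ∀ k ∈ g.support, W ≤ wtP g ρ k)
    (hmem : ∃ k ∈ g.support, wtP g ρ k = W) : tropP g ρ = (W : WithTop ℚ) := by
  obtain ⟨k, hk, hwk⟩ := hmem
  refine le_antisymm ?_ ?_
  · have h := Finset.inf_le (f := fun i => ((wtP g ρ i : ℚ) : WithTop ℚ)) hk
    rw [← tropP, hwk] at h
    exact h
  · exact Finset.le_inf fun i hi => by exact_mod_cast hlb i hi

lemma filter_eq (g : Polynomial K) (ρ W : ℚ) (htrop : tropP g ρ = (W : WithTop ℚ)) :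
    (g.support.filter fun i => (wtP g ρ i : WithTop ℚ) = tropP g ρ) = mset g ρ W := by
  unfold mset
  refine Finset.filter_congr fun i _ => ?_
  rw [htrop]
  exact_mod_cast Iff.rfl

lemma initFormP_coeff (g : Polynomial K) (ρ : ℚ) (n : ℕ) :
    (initFormP g ρ).coeff n
      = if n ∈ (g.support.filter fun i => (wtP g ρ i : WithTop ℚ) = tropP g ρ)
        then pc (g.coeff n) else 0 := by
  unfold initFormP
  rw [Polynomial.finset_sum_coeff]
  rw [Finset.sum_congr rfl fun i _ => Polynomial.coeff_monomial (n := i)]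
  exact Finset.sum_ite_eq' _ _ _

lemma initFormP_support (g : Polynomial K) (ρ : ℚ) :
    (initFormP g ρ).support ⊆
      g.support.filter fun i => (wtP g ρ i : WithTop ℚ) = tropP g ρ := by
  intro n hn
  have h := Polynomial.mem_support_iff.mp hn
  rw [initFormP_coeff] at h
  by_contra hc
  exact h (if_neg hc)

lemma bridge_taylor (g : Polynomial K) (ρ W : ℚ)
    (htrop : tropP g ρ = (W : WithTop ℚ)) (γ₀ : ℂ) (j : ℕ) :
    ∑ i ∈ mset g ρ W, pc (g.coeff i) * (γ₀ ^ (i - j) * (i.choose j : ℂ))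
      = (Polynomial.taylor γ₀ (initFormP g ρ)).coeff j := by
  rw [taylor_coeff_sum' (initFormP g ρ) γ₀ j (mset g ρ W)
      (by rw [← filter_eq g ρ W htrop]; exact initFormP_support g ρ)]
  refine Finset.sum_congr rfl fun i hi => ?_
  rw [initFormP_coeff, filter_eq g ρ W htrop, if_pos hi]

lemma mem_mset {g : Polynomial K} {ρ W : ℚ} {i : ℕ} :
    i ∈ mset g ρ W ↔ i ∈ g.support ∧ wtP g ρ i = W := by
  unfold mset; exact Finset.mem_filter

variable (f : Polynomial K)

/-- indices `j ≠ 0` in the support of the Taylor expansion of `f` at `x` -/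
def sfin (x : K) : Finset ℕ := (Polynomial.taylor x f).support.filter fun j => j ≠ 0

def slopeF (x : K) (j : ℕ) : ℚ :=
  ((f.eval x).order - ((Polynomial.taylor x f).coeff j).order) / j

/-- the next Newton slope at `x` -/
def RR (x : K) : ℚ :=
  if h : (sfin f x).Nonempty then (sfin f x).sup' h (slopeF f x) else 0

/-- the next Newton coefficient at `x` -/
def gam (x : K) : ℂ :=
  if h : ∃ c : ℂ, c ≠ 0 ∧ (initFormP (Polynomial.taylor x f) (RR f x)).eval c = 0
  then h.choose else 1

def rel (x y : K) : Prop :=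
  x = y ∨ (f.eval x ≠ 0 ∧ y - x ≠ 0 ∧ (y - x).order = RR f x ∧ pc (y - x) = gam f x)

variable {f}

section PerPoint
variable {x : K} (hdeg : 1 ≤ f.natDegree) (hx : f.eval x ≠ 0)
include hdeg hx

lemma taylor_ne : Polynomial.taylor x f ≠ 0 := fun h => by
  have := Polynomial.taylor_coeff_zero (r := x) (f := f)
  rw [h] at this
  exact hx (by simpa using this.symm)

lemma sfin_ne : (sfin f x).Nonempty := by
  refine ⟨f.natDegree, Finset.mem_filter.mpr ⟨?_, by omega⟩⟩
  rw [Polynomial.mem_support_iff]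
  have h1 : (Polynomial.taylor x f).natDegree = f.natDegree := Polynomial.natDegree_taylor f x
  have := Polynomial.leadingCoeff_ne_zero.mpr (taylor_ne hdeg hx)
  rwa [Polynomial.leadingCoeff, h1] at this

lemma slope_le_RR {j : ℕ} (hj : j ∈ sfin f x) : slopeF f x j ≤ RR f x := by
  rw [RR, dif_pos (sfin_ne hdeg hx)]
  exact Finset.le_sup' _ hj

lemma exists_RR : ∃ j ∈ sfin f x, RR f x = slopeF f x j := by
  rw [RR, dif_pos (sfin_ne hdeg hx)]
  obtain ⟨j, hj, hs⟩ := Finset.exists_mem_eq_sup' (sfin_ne hdeg hx) (slopeF f x)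
  exact ⟨j, hj, hs⟩

lemma wt_lb : ∀ k ∈ (Polynomial.taylor x f).support,
    (f.eval x).order ≤ wtP (Polynomial.taylor x f) (RR f x) k := by
  intro k hk
  rcases Nat.eq_zero_or_pos k with rfl | hkpos
  · rw [wtP, Polynomial.taylor_coeff_zero]
    simp
  · have hk' : k ∈ sfin f x := Finset.mem_filter.mpr ⟨hk, by omega⟩
    have h := slope_le_RR hdeg hx hk'
    rw [slopeF, div_le_iff₀ (by exact_mod_cast hkpos : (0:ℚ) < (k:ℚ))] at h
    rw [wtP]
    linarith [mul_comm (RR f x) (k:ℚ)]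

lemma zero_mem_supp : (0 : ℕ) ∈ (Polynomial.taylor x f).support := by
  rw [Polynomial.mem_support_iff, Polynomial.taylor_coeff_zero]
  exact hx

lemma wt_zero : wtP (Polynomial.taylor x f) (RR f x) 0 = (f.eval x).order := by
  rw [wtP, Polynomial.taylor_coeff_zero]
  simp

lemma trop_taylor :
    tropP (Polynomial.taylor x f) (RR f x) = ((f.eval x).order : WithTop ℚ) :=
  trop_eq _ _ _ (wt_lb hdeg hx) ⟨0, zero_mem_supp hdeg hx, wt_zero hdeg hx⟩

lemma jwit : ∃ j : ℕ, j ≠ 0 ∧ j ∈ (Polynomial.taylor x f).support ∧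
    wtP (Polynomial.taylor x f) (RR f x) j = (f.eval x).order := by
  obtain ⟨j, hj, hs⟩ := exists_RR hdeg hx
  obtain ⟨hjs, hj0⟩ := Finset.mem_filter.mp hj
  refine ⟨j, hj0, hjs, ?_⟩
  have hjq : ((j:ℚ)) ≠ 0 := by exact_mod_cast hj0
  rw [wtP, hs, slopeF, mul_comm, div_mul_cancel₀ _ hjq]
  ring

lemma initF_coeff_zero :
    (initFormP (Polynomial.taylor x f) (RR f x)).coeff 0 = pc (f.eval x) := by
  rw [initFormP_coeff, filter_eq _ _ _ (trop_taylor hdeg hx),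
    if_pos (mem_mset.mpr ⟨zero_mem_supp hdeg hx, wt_zero hdeg hx⟩),
    Polynomial.taylor_coeff_zero]

lemma initF_natDegree : 1 ≤ (initFormP (Polynomial.taylor x f) (RR f x)).natDegree := by
  obtain ⟨j, hj0, hjs, hjw⟩ := jwit hdeg hx
  have hc : (initFormP (Polynomial.taylor x f) (RR f x)).coeff j ≠ 0 := by
    rw [initFormP_coeff, filter_eq _ _ _ (trop_taylor hdeg hx),
      if_pos (mem_mset.mpr ⟨hjs, hjw⟩)]
    exact pc_ne_zero (Polynomial.mem_support_iff.mp hjs)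
  have := Polynomial.le_natDegree_of_ne_zero hc
  omega

lemma gam_spec : gam f x ≠ 0 ∧
    (initFormP (Polynomial.taylor x f) (RR f x)).eval (gam f x) = 0 := by
  have hex : ∃ c : ℂ, c ≠ 0 ∧ (initFormP (Polynomial.taylor x f) (RR f x)).eval c = 0 := by
    have hdegP : (0 : WithBot ℕ) < (initFormP (Polynomial.taylor x f) (RR f x)).degree :=
      Polynomial.natDegree_pos_iff_degree_pos.mp (initF_natDegree hdeg hx)
    obtain ⟨c, hc⟩ := IsAlgClosed.exists_root (k := ℂ) _ hdegP.ne'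
    refine ⟨c, fun hc0 => ?_, hc⟩
    subst hc0
    rw [Polynomial.IsRoot, ← Polynomial.coeff_zero_eq_eval_zero,
      initF_coeff_zero hdeg hx] at hc
    exact pc_ne_zero hx hc
  rw [gam, dif_pos hex]
  exact hex.choose_spec
end PerPoint

/-- If `a` vanishes at levels `≤ b.order`, then `a + b` has the same order and
leading coefficient as `b`. -/
lemma add_lt {a b : K} (hb : b ≠ 0) (ha : ∀ q ≤ b.order, a.coeff q = 0) :
    (a + b ≠ 0) ∧ (a + b).order = b.order ∧ pc (a + b) = pc b := by
  have hco : (a + b).coeff b.order = b.coeff b.order := by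
    rw [HahnSeries.coeff_add, ha _ le_rfl, zero_add]
  have hcoeff : (a + b).coeff b.order ≠ 0 := by
    rw [hco]; exact (HahnSeries.coeff_order_eq_zero.not.mpr hb)
  have hlow : ∀ p, p < b.order → (a + b).coeff p = 0 := fun p hp => by
    rw [HahnSeries.coeff_add, ha _ hp.le, HahnSeries.coeff_eq_zero_of_lt_order hp, add_zero]
  have ho := order_eq_of _ _ hcoeff hlow
  refine ⟨HahnSeries.ne_zero_of_coeff_ne_zero hcoeff, ho, ?_⟩
  rw [pc, ho, hco]; rfl

lemma main_step (hdeg : 1 ≤ f.natDegree) (x z : K) (ρ W : ℚ)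
    (htrop : tropP (Polynomial.taylor x f) ρ = (W : WithTop ℚ))
    (hz : z ≠ 0) (hzo : z.order = ρ)
    (hroot0 : (initFormP (Polynomial.taylor x f) ρ).eval (pc z) = 0)
    (hIF : 1 ≤ (initFormP (Polynomial.taylor x f) ρ).natDegree) :
    (∀ q ≤ W, (f.eval (x + z)).coeff q = 0) ∧
    (f.eval (x + z) ≠ 0 → W < (f.eval (x + z)).order ∧ ρ < RR f (x + z)) := by
  have hWlb := trop_le _ _ _ htrop
  have heval : f.eval (x + z) = (Polynomial.taylor z (Polynomial.taylor x f)).coeff 0 := by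
    rw [Polynomial.taylor_coeff_zero, Polynomial.taylor_eval, add_comm]
  have part1 : ∀ q ≤ W, (f.eval (x + z)).coeff q = 0 := by
    intro q hq
    rcases lt_or_eq_of_le hq with hlt | rfl
    · rw [heval]
      exact core_a hz hzo hWlb 0 q (by simpa using hlt)
    · rw [heval]
      have h0 : q - (0:ℕ) * ρ = q := by push_cast; ring
      calc ((Polynomial.taylor z (Polynomial.taylor x f)).coeff 0).coeff q
          = ((Polynomial.taylor z (Polynomial.taylor x f)).coeff 0).coeff (q - (0:ℕ) * ρ) := by
            rw [h0]
        _ = _ := core_b hz hzo hWlb 0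
        _ = (Polynomial.taylor (pc z) (initFormP (Polynomial.taylor x f) ρ)).coeff 0 :=
            bridge_taylor _ _ _ htrop _ 0
        _ = 0 := by rw [Polynomial.taylor_coeff_zero, hroot0]
  refine ⟨part1, fun hne => ?_⟩
  have hWlt : W < (f.eval (x + z)).order := by
    by_contra h
    push_neg at h
    exact (HahnSeries.coeff_order_eq_zero.not.mpr hne) (part1 _ h)
  set P := initFormP (Polynomial.taylor x f) ρ with hP
  set j₁ := P.natDegree with hj₁
  have hPne : P ≠ 0 := by
    intro h0
    have h2 : (1:ℕ) ≤ (0 : Polynomial ℂ).natDegree := by rw [← h0]; exact hIF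
    simp at h2
  have htayPne : Polynomial.taylor (pc z) P ≠ 0 := fun h0 =>
    hPne (Polynomial.taylor_injective (pc z) (by rw [h0, map_zero]))
  have hcoeff : (Polynomial.taylor (pc z) P).coeff j₁ ≠ 0 := by
    have := Polynomial.leadingCoeff_ne_zero.mpr htayPne
    rwa [Polynomial.leadingCoeff, Polynomial.natDegree_taylor] at this
  have hb₁coeff : ((Polynomial.taylor z (Polynomial.taylor x f)).coeff j₁).coeff (W - j₁ * ρ)
      = (Polynomial.taylor (pc z) P).coeff j₁ :=
    (core_b hz hzo hWlb j₁).trans (bridge_taylor _ _ _ htrop _ j₁)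
  have hb₁ne : (Polynomial.taylor z (Polynomial.taylor x f)).coeff j₁ ≠ 0 :=
    HahnSeries.ne_zero_of_coeff_ne_zero (hb₁coeff ▸ hcoeff)
  have horder : ((Polynomial.taylor z (Polynomial.taylor x f)).coeff j₁).order = W - j₁ * ρ :=
    order_eq_of _ _ (hb₁coeff ▸ hcoeff) (fun p hp => core_a hz hzo hWlb j₁ p hp)
  have htt : Polynomial.taylor z (Polynomial.taylor x f) = Polynomial.taylor (x + z) f := by
    rw [Polynomial.taylor_taylor, add_comm]
  have hj₁mem : j₁ ∈ sfin f (x + z) := by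
    refine Finset.mem_filter.mpr ⟨Polynomial.mem_support_iff.mpr ?_, by omega⟩
    rw [← htt]; exact hb₁ne
  have hslope : slopeF f (x + z) j₁ = ((f.eval (x + z)).order - (W - j₁ * ρ)) / j₁ := by
    rw [slopeF, ← htt, horder]
  have hle := slope_le_RR hdeg hne hj₁mem
  have hj₁pos : (0:ℚ) < (j₁:ℚ) := by exact_mod_cast (by omega : 0 < j₁)
  refine ⟨hWlt, lt_of_lt_of_le ?_ hle⟩
  rw [hslope, lt_div_iff₀ hj₁pos]
  nlinarith [hWlt]

lemma step_lemma (hdeg : 1 ≤ f.natDegree) {x y : K} (hx : f.eval x ≠ 0)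
    (hy : y - x ≠ 0) (ho : (y - x).order = RR f x) (hpc : pc (y - x) = gam f x) :
    (∀ q ≤ (f.eval x).order, (f.eval y).coeff q = 0) ∧
    (f.eval y ≠ 0 → (f.eval x).order < (f.eval y).order ∧ RR f x < RR f y) := by
  have h := main_step hdeg x (y - x) (RR f x) ((f.eval x).order) (trop_taylor hdeg hx) hy ho
    (by rw [hpc]; exact (gam_spec hdeg hx).2) (initF_natDegree hdeg hx)
  rwa [show x + (y - x) = y by ring] at h

lemma rel_trans (hdeg : 1 ≤ f.natDegree) {x y z : K}
    (h1 : rel f x y) (h2 : rel f y z) : rel f x z := by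
  rcases h1 with rfl | ⟨hx, hyx, hoyx, hpcyx⟩
  · exact h2
  rcases h2 with rfl | ⟨hy, hzy, hozy, hpczy⟩
  · exact Or.inr ⟨hx, hyx, hoyx, hpcyx⟩
  have hRR : RR f x < RR f y := ((step_lemma hdeg hx hyx hoyx hpcyx).2 hy).2
  have hkey := add_lt (a := z - y) (b := y - x) hyx (fun q hq =>
    HahnSeries.coeff_eq_zero_of_lt_order (by
      rw [hozy]; rw [hoyx] at hq; exact lt_of_le_of_lt hq hRR))
  rw [sub_add_sub_cancel] at hkey
  refine Or.inr ⟨hx, hkey.1, ?_, ?_⟩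
  · rw [hkey.2.1, hoyx]
  · rw [hkey.2.2, hpcyx]


theorem exists_max (hdeg : 1 ≤ f.natDegree) (x₀ : K) :
    ∃ m : K, rel f x₀ m ∧ f.eval m = 0 := by
  let T := {x : K // rel f x₀ x}
  let r : T → T → Prop := fun a b => rel f a.val b.val
  have hbdd : ∀ c : Set T, IsChain r c → ∃ ub, ∀ a ∈ c, r a ub := by
    intro c hc
    by_cases htop : ∃ t ∈ c, ∀ a ∈ c, rel f a.val t.val
    · obtain ⟨t, _, ht⟩ := htop; exact ⟨t, ht⟩
    push_neg at htop
    -- every element of c has a strict successor in c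
    have hstrict : ∀ t, t ∈ c → ∃ b, b ∈ c ∧ f.eval t.val ≠ 0 ∧ b.val - t.val ≠ 0 ∧
        (b.val - t.val).order = RR f t.val ∧ pc (b.val - t.val) = gam f t.val := by
      intro t ht
      obtain ⟨a, ha, hna⟩ := htop t ht
      have hat : a ≠ t := fun h => hna (h ▸ Or.inl rfl)
      rcases hc ht ha (fun h => hat h.symm) with h | h
      · rcases h with h | h
        · exact absurd (Subtype.ext h) (fun h' => hat h'.symm)
        · exact ⟨a, ha, h⟩
      · exact absurd h hna
    have hfc : ∀ t, t ∈ c → f.eval t.val ≠ 0 := fun t ht => ((hstrict t ht).choose_spec).2.1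
    -- strict growth of RR along the chain
    have hmono : ∀ u v : T, u ∈ c → v ∈ c → u.val ≠ v.val →
        rel f u.val v.val → RR f u.val < RR f v.val := by
      intro u v hu hv hne huv
      rcases huv with h | ⟨h1, h2, h3, h4⟩
      · exact absurd h hne
      · exact ((step_lemma hdeg h1 h2 h3 h4).2 (hfc v hv)).2
    -- coefficients below RR agree along the chain
    have hwd : ∀ u v : T, u ∈ c → v ∈ c → ∀ q : ℚ, q < RR f u.val → q < RR f v.val →
        u.val.coeff q = v.val.coeff q := by
      intro u v hu hv q hqu hqv
      rcases eq_or_ne u v with rfl | huv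
      · rfl
      have key : ∀ a b : T, a ∈ c → b ∈ c → rel f a.val b.val → q < RR f a.val →
          a.val.coeff q = b.val.coeff q := by
        intro a b _ _ hab hq
        rcases hab with h | ⟨_, _, h3, _⟩
        · rw [h]
        · have : (b.val - a.val).coeff q = 0 :=
            HahnSeries.coeff_eq_zero_of_lt_order (by rw [h3]; exact hq)
          rw [HahnSeries.coeff_sub] at this
          linear_combination -this
      rcases hc hu hv huv with h | h
      · exact key u v hu hv h hqu
      · exact (key v u hv hu h hqv).symm
    -- the limit of the chain
    by_cases hcne : c.Nonempty
    · set F : ℚ → ℂ := fun q =>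
        if h : ∃ u : T, u ∈ c ∧ q < RR f u.val then h.choose.val.coeff q else 0 with hF
      have hFeq : ∀ (u : T), u ∈ c → ∀ q : ℚ, q < RR f u.val → F q = u.val.coeff q := by
        intro u hu q hq
        have hex : ∃ u : T, u ∈ c ∧ q < RR f u.val := ⟨u, hu, hq⟩
        rw [hF]
        simp only [dif_pos hex]
        exact hwd _ _ hex.choose_spec.1 hu q hex.choose_spec.2 hq
      have hF0 : ∀ q : ℚ, F q ≠ 0 → ∃ u : T, u ∈ c ∧ q < RR f u.val := by
        intro q hq
        by_contra hno
        rw [hF] at hq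
        simp only [dif_neg hno] at hq
        exact hq rfl
      have hpwo : (Function.support F).IsPWO := by
        refine Set.IsWF.isPWO ?_
        rw [Set.isWF_iff_no_descending_seq]
        intro g hg hmem
        obtain ⟨u, hu, hqu⟩ := hF0 (g 0) (hmem 0)
        have hsub : ∀ n, g n ∈ u.val.support := by
          intro n
          have hgn : g n < RR f u.val :=
            lt_of_le_of_lt (by rcases Nat.eq_zero_or_pos n with rfl | hn
                               · exact le_rfl
                               · exact (hg hn).le) hqu
          have h1 := hFeq u hu (g n) hgn
          have h2 : F (g n) ≠ 0 := Function.mem_support.mp (hmem n)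
          rw [h1] at h2
          exact Function.mem_support.mpr h2
        exact (Set.isWF_iff_no_descending_seq.mp u.val.isWF_support) g hg hsub
      set L : K := ⟨F, hpwo⟩ with hL
      have hLcoeff : ∀ q, L.coeff q = F q := fun q => rfl
      obtain ⟨a₀, ha₀⟩ := hcne
      have hrelL : ∀ a : T, a ∈ c → rel f a.val L := by
        intro a ha
        obtain ⟨b, hb, hfa, hba, hbo, hbpc⟩ := hstrict a ha
        have hab : a.val ≠ b.val := fun h => hba (by rw [h, sub_self])
        have hRRab : RR f a.val < RR f b.val :=
          hmono a b ha hb hab (Or.inr ⟨hfa, hba, hbo, hbpc⟩)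
        have hlow : ∀ q, q < RR f a.val → (L - a.val).coeff q = 0 := by
          intro q hq
          rw [HahnSeries.coeff_sub, hLcoeff, hFeq a ha q hq, sub_self]
        have htopc : (L - a.val).coeff (RR f a.val) = gam f a.val := by
          rw [HahnSeries.coeff_sub, hLcoeff, hFeq b hb _ hRRab]
          have : (b.val - a.val).coeff (RR f a.val) = gam f a.val := by
            rw [← hbpc, pc, hbo]
          rw [HahnSeries.coeff_sub] at this
          linear_combination this
        have hgam0 : gam f a.val ≠ 0 := (gam_spec hdeg hfa).1
        have hcne0 : (L - a.val).coeff (RR f a.val) ≠ 0 := by rw [htopc]; exact hgam0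
        have hord : (L - a.val).order = RR f a.val :=
          order_eq_of _ _ hcne0 (fun p hp => hlow p hp)
        refine Or.inr ⟨hfa, HahnSeries.ne_zero_of_coeff_ne_zero hcne0, hord, ?_⟩
        rw [pc, hord, htopc]
      have hLmem : rel f x₀ L := rel_trans hdeg a₀.2 (hrelL a₀ ha₀)
      exact ⟨⟨L, hLmem⟩, fun a ha => hrelL a ha⟩
    · refine ⟨⟨x₀, Or.inl rfl⟩, fun a ha => absurd ⟨a, ha⟩ hcne⟩
  obtain ⟨m, hm⟩ := exists_maximal_of_chains_bounded hbdd
    (fun {a b c} h1 h2 => rel_trans hdeg h1 h2)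
  refine ⟨m.val, m.2, ?_⟩
  by_contra hfm
  -- do one more Newton step, contradicting maximality
  set z := HahnSeries.single (RR f m.val) (gam f m.val) with hz
  have hgam0 : gam f m.val ≠ 0 := (gam_spec hdeg hfm).1
  have hzne : z ≠ 0 := HahnSeries.single_ne_zero hgam0
  have hzo : z.order = RR f m.val := HahnSeries.order_single hgam0
  have hzpc : pc z = gam f m.val := pc_single hgam0
  have hyz : m.val + z - m.val = z := add_sub_cancel_left _ _
  have hrelmy : rel f m.val (m.val + z) := Or.inr ⟨hfm, by rw [hyz]; exact hzne,
    by rw [hyz]; exact hzo, by rw [hyz]; exact hzpc⟩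
  have hymem : rel f x₀ (m.val + z) := rel_trans hdeg m.2 hrelmy
  have := hm ⟨m.val + z, hymem⟩ hrelmy
  rcases this with h | ⟨hfy, h2, h3, _⟩
  · have h2 : m.val + z = m.val := h
    exact hzne (by rw [← hyz, h2, sub_self])
  · -- (m - (m+z)).order = RR f (m+z) > RR f m, but m - (m+z) = -z has order RR f m
    have hmy : m.val - (m.val + z) = -z := by rw [sub_add_eq_sub_sub, sub_self, zero_sub]
    have hRRy : RR f m.val < RR f (m.val + z) :=
      ((step_lemma hdeg hfm (by rw [hyz]; exact hzne) (by rw [hyz]; exact hzo)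
        (by rw [hyz]; exact hzpc)).2 hfy).2
    rw [hmy, HahnSeries.order_neg, hzo] at h3
    exact absurd h3 (ne_of_lt hRRy)

end NPaux

open NPaux

/-- Univariate Newton–Puiseux with principal terms: if the minimum defining
`tropP f r` is attained at two distinct indices and `γ ∈ ℂ*` is a root of the
initial form `f̃_r`, then `f` has a root `x ∈ K*` with `o(x) = r` and
`pc(x) = γ`. -/
theorem newton_puiseux_univariate (f : Polynomial K) (hf : f ≠ 0) (r : ℚ)
    (htwice : ∃ i ∈ f.support, ∃ j ∈ f.support, i ≠ j ∧
      (wtP f r i : WithTop ℚ) = tropP f r ∧ (wtP f r j : WithTop ℚ) = tropP f r)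
    (γ : ℂ) (hγ : γ ≠ 0) (hroot : (initFormP f r).eval γ = 0) :
    ∃ x : K, x ≠ 0 ∧ f.eval x = 0 ∧ x.order = r ∧ pc x = γ := by
  obtain ⟨i, hi, i', hi', hne, hei, hei'⟩ := htwice
  have hdeg : 1 ≤ f.natDegree := by
    have h1 := Polynomial.le_natDegree_of_ne_zero (Polynomial.mem_support_iff.mp hi)
    have h2 := Polynomial.le_natDegree_of_ne_zero (Polynomial.mem_support_iff.mp hi')
    omega
  set x₀ : K := HahnSeries.single r γ with hx₀
  have hx₀ne : x₀ ≠ 0 := HahnSeries.single_ne_zero hγ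
  have hx₀o : x₀.order = r := HahnSeries.order_single hγ
  have hx₀pc : pc x₀ = γ := pc_single hγ
  by_cases h0 : f.eval x₀ = 0
  · exact ⟨x₀, hx₀ne, h0, hx₀o, hx₀pc⟩
  set W₀ := wtP f r i with hW₀
  have htropf : tropP f r = (W₀ : WithTop ℚ) := hei.symm
  have htrop0 : tropP (Polynomial.taylor (0:K) f) r = (W₀ : WithTop ℚ) := by
    rw [Polynomial.taylor_zero]; exact htropf
  have hIF : 1 ≤ (initFormP (Polynomial.taylor (0:K) f) r).natDegree := by
    rw [Polynomial.taylor_zero]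
    have hci : (initFormP f r).coeff i ≠ 0 := by
      rw [initFormP_coeff, if_pos (Finset.mem_filter.mpr ⟨hi, hei⟩)]
      exact pc_ne_zero (Polynomial.mem_support_iff.mp hi)
    have hci' : (initFormP f r).coeff i' ≠ 0 := by
      rw [initFormP_coeff, if_pos (Finset.mem_filter.mpr ⟨hi', hei'⟩)]
      exact pc_ne_zero (Polynomial.mem_support_iff.mp hi')
    have h1 := Polynomial.le_natDegree_of_ne_zero hci
    have h2 := Polynomial.le_natDegree_of_ne_zero hci'
    omega
  have hroot0 : (initFormP (Polynomial.taylor (0:K) f) r).eval (pc x₀) = 0 := by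
    rw [Polynomial.taylor_zero, hx₀pc]; exact hroot
  have hstep := main_step hdeg 0 x₀ r W₀ htrop0 hx₀ne hx₀o hroot0 hIF
  rw [zero_add] at hstep
  have hinit := hstep.2 h0
  obtain ⟨m, hrelm, hfm⟩ := exists_max hdeg x₀
  rcases hrelm with rfl | ⟨_, hm1, hm2, hm3⟩
  · exact absurd hfm h0
  have ha : ∀ q ≤ x₀.order, (m - x₀).coeff q = 0 := fun q hq =>
    HahnSeries.coeff_eq_zero_of_lt_order (by
      rw [hm2]
      rw [hx₀o] at hq
      exact lt_of_le_of_lt hq hinit.2)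
  obtain ⟨hne', ho', hpc'⟩ := add_lt hx₀ne ha
  rw [sub_add_cancel] at hne' ho' hpc'
  exact ⟨m, hne', hfm, by rw [ho', hx₀o], by rw [hpc', hx₀pc]⟩
end
end

section
/- Let f̃ = Σ_{i∈I} ã_i x^i ∈ K[x₁,…,x_n] be nonzero with tropicalization f(x) = min_i {o(ã_i) + i·x}, and let b ∈ ℚⁿ. The following are equivalent: (1) the minimum f(b) is attained by at least two distinct indices i ∈ I with ã_i ≠ 0 (i.e., b ∈ 𝒯(f)); (2) the initial form f̃_b ∈ ℂ[x₁,…,x_n] has at least two monomials; (3) f̃_b has a root in (ℂ*)ⁿ. -/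
noncomputable section

/-- The weight of the multi-index `i` of `f` at the point `b`:
`o(a_i) + i·b`. -/
def wt {n : ℕ} (f : MvPolynomial (Fin n) K) (b : Fin n → ℚ) (i : Fin n →₀ ℕ) : ℚ :=
  (f.coeff i).order + ∑ j, (i j : ℚ) * b j

/-- The tropicalization `f(b) = min_{i ∈ supp f} (o(a_i) + i·b)`, with value `⊤`
for the zero polynomial. -/
def trop {n : ℕ} (f : MvPolynomial (Fin n) K) (b : Fin n → ℚ) : WithTop ℚ :=
  f.support.inf fun i => (wt f b i : WithTop ℚ)

/-- The tropical hypersurface `𝒯(f)`: points where the minimum is attained at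
least twice. -/
def tropSet {n : ℕ} (f : MvPolynomial (Fin n) K) : Set (Fin n → ℚ) :=
  {b | ∃ i ∈ f.support, ∃ j ∈ f.support, i ≠ j ∧
    (wt f b i : WithTop ℚ) = trop f b ∧ (wt f b j : WithTop ℚ) = trop f b}

/-- The initial form `f̃_b ∈ ℂ[x]` of `f` at `b`. -/
def initForm {n : ℕ} (f : MvPolynomial (Fin n) K) (b : Fin n → ℚ) :
    MvPolynomial (Fin n) ℂ :=
  ∑ i ∈ f.support.filter fun i => (wt f b i : WithTop ℚ) = trop f b,
    MvPolynomial.monomial i (pc (f.coeff i))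


open Polynomial in
lemma exists_root_ne_zero (P : Polynomial ℂ) (h : 1 < P.support.card) :
    ∃ t : ℂ, t ≠ 0 ∧ P.eval t = 0 := by
  have hP : P ≠ 0 := by rintro rfl; simp at h
  by_contra hc
  push_neg at hc
  have hall : ∀ t ∈ P.roots, t = (0 : ℂ) := by
    intro t ht
    by_contra ht0
    exact hc t ht0 ((mem_roots hP).1 ht)
  have hrep : P.roots = Multiset.replicate (Multiset.card P.roots) 0 :=
    Multiset.eq_replicate_card.2 hall
  have heq := (C_leadingCoeff_mul_prod_multiset_X_sub_C (IsAlgClosed.card_roots_eq_natDegree (p := P))).symm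
  rw [hrep] at heq
  simp only [Multiset.map_replicate, map_zero, sub_zero, Multiset.prod_replicate] at heq
  rw [C_mul_X_pow_eq_monomial] at heq
  have hsupp : P.support ⊆ {Multiset.card P.roots} := by
    conv_lhs => rw [heq]
    exact support_monomial' _ _
  have : P.support.card ≤ 1 := by simpa using Finset.card_le_card hsupp
  omega

lemma digits_injective {D : ℕ} : ∀ {n : ℕ} (i j : Fin n → ℕ),
    (∀ m, i m < D) → (∀ m, j m < D) →
    (∑ m, i m * D ^ (m : ℕ)) = ∑ m, j m * D ^ (m : ℕ) → i = j := by
  intro n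
  induction n with
  | zero => intro i j _ _ _; funext m; exact absurd m.2 (Nat.not_lt_zero _)
  | succ n ih =>
    intro i j hi hj hsum
    have hD : 0 < D := Nat.pos_of_ne_zero (by rintro rfl; exact Nat.not_lt_zero _ (hi 0))
    rw [Fin.sum_univ_succ, Fin.sum_univ_succ] at hsum
    simp only [Fin.val_succ, Fin.val_zero, pow_succ, pow_zero, mul_one, ← mul_assoc] at hsum
    have h1 : (∑ m : Fin n, i m.succ * D ^ (m : ℕ)) * D = ∑ m : Fin n, i m.succ * D ^ (m : ℕ) * D := by
      rw [Finset.sum_mul]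
    have h2 : (∑ m : Fin n, j m.succ * D ^ (m : ℕ)) * D = ∑ m : Fin n, j m.succ * D ^ (m : ℕ) * D := by
      rw [Finset.sum_mul]
    rw [← h1, ← h2] at hsum
    have h0 : i 0 = j 0 := by
      have := congrArg (· % D) hsum
      simpa [Nat.add_mul_mod_self_right, Nat.mod_eq_of_lt (hi 0), Nat.mod_eq_of_lt (hj 0)]
        using this
    have htail : (fun m : Fin n => i m.succ) = fun m => j m.succ := by
      apply ih _ _ (fun m => hi m.succ) (fun m => hj m.succ)
      have : (∑ m : Fin n, i m.succ * D ^ (m : ℕ)) * D = (∑ m : Fin n, j m.succ * D ^ (m : ℕ)) * D := by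
        omega
      exact Nat.eq_of_mul_eq_mul_right hD this
    funext m
    cases m using Fin.cases with
    | zero => exact h0
    | succ m => exact congrFun htail m

open MvPolynomial in
lemma exists_torus_root {n : ℕ} (g : MvPolynomial (Fin n) ℂ)
    (h : 1 < g.support.card) :
    ∃ γ : Fin n → ℂ, (∀ j, γ j ≠ 0) ∧ MvPolynomial.eval γ g = 0 := by
  set D := g.totalDegree + 1 with hD
  have hlt : ∀ i ∈ g.support, ∀ m, (i : (Fin n →₀ ℕ)) m < D := by
    intro i hi m
    have h1 : i m ≤ i.sum fun _ e => e := by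
      by_cases hm : m ∈ i.support
      · exact Finset.single_le_sum (f := fun a => i a) (fun _ _ => Nat.zero_le _) hm
      · simp [Finsupp.notMem_support_iff.1 hm]
    exact lt_of_le_of_lt (h1.trans (le_totalDegree hi)) (Nat.lt_succ_self _)
  set e : (Fin n →₀ ℕ) → ℕ := fun i => ∑ m, i m * D ^ (m : ℕ) with he
  have einj : Set.InjOn e g.support := by
    intro i hi j hj hij
    have := digits_injective (fun m => i m) (fun m => j m) (hlt i hi) (hlt j hj) hij
    exact Finsupp.ext fun m => congrFun this m
  set P : Polynomial ℂ := ∑ i ∈ g.support, Polynomial.C (g.coeff i) * Polynomial.X ^ (e i) with hP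
  have hPcoeff : ∀ i ∈ g.support, P.coeff (e i) = g.coeff i := by
    intro i hi
    rw [hP, Polynomial.finset_sum_coeff]
    rw [Finset.sum_eq_single i]
    · simp [Polynomial.coeff_C_mul_X_pow]
    · intro j hj hji
      rw [Polynomial.coeff_C_mul_X_pow]
      simp only [ite_eq_right_iff]
      intro hejei
      exact absurd (einj hj hi hejei.symm) hji
    · intro hi'; exact absurd hi hi'
  have hsub : g.support.image e ⊆ P.support := by
    intro k hk
    obtain ⟨i, hi, rfl⟩ := Finset.mem_image.1 hk
    rw [Polynomial.mem_support_iff, hPcoeff i hi]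
    exact MvPolynomial.mem_support_iff.1 hi
  have hcard : 1 < P.support.card := by
    calc 1 < g.support.card := h
    _ = (g.support.image e).card := (Finset.card_image_of_injOn einj).symm
    _ ≤ P.support.card := Finset.card_le_card hsub
  obtain ⟨t, ht0, htr⟩ := exists_root_ne_zero P hcard
  refine ⟨fun m => t ^ D ^ (m : ℕ), fun m => pow_ne_zero _ ht0, ?_⟩
  rw [MvPolynomial.eval_eq']
  rw [hP] at htr
  simp only [Polynomial.eval_finset_sum, Polynomial.eval_mul, Polynomial.eval_C,
    Polynomial.eval_pow, Polynomial.eval_X] at htr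
  rw [← htr]
  refine Finset.sum_congr rfl fun i hi => ?_
  congr 1
  have : ∏ m : Fin n, (t ^ D ^ (m : ℕ)) ^ i m = t ^ ∑ m : Fin n, D ^ (m : ℕ) * i m := by
    rw [← Finset.prod_pow_eq_pow_sum]
    exact Finset.prod_congr rfl fun m _ => (pow_mul t (D ^ (m : ℕ)) (i m)).symm
  rw [this, he]
  congr 1
  exact Finset.sum_congr rfl fun m _ => Nat.mul_comm _ _

/-- For a nonzero `f` and `b ∈ ℚⁿ`, the following are equivalent:
`b ∈ 𝒯(f)`; the initial form `f̃_b` has at least two monomials; and `f̃_b` has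
a root in the complex torus `(ℂ*)ⁿ`. -/
theorem tropSet_iff_initForm (n : ℕ) (f : MvPolynomial (Fin n) K) (hf : f ≠ 0)
    (b : Fin n → ℚ) :
    (b ∈ tropSet f ↔ 1 < (initForm f b).support.card) ∧
    (b ∈ tropSet f ↔ ∃ γ : Fin n → ℂ, (∀ j, γ j ≠ 0) ∧
      MvPolynomial.eval γ (initForm f b) = 0) := by
  classical
  set S := f.support.filter (fun i => (wt f b i : WithTop ℚ) = trop f b) with hS
  have hpc : ∀ i ∈ f.support, pc (f.coeff i) ≠ 0 := fun i hi =>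
    HahnSeries.coeff_order_eq_zero.not.2 (MvPolynomial.mem_support_iff.1 hi)
  have hcoeff : ∀ j, (initForm f b).coeff j = if j ∈ S then pc (f.coeff j) else 0 := by
    intro j
    rw [initForm, ← hS, MvPolynomial.coeff_sum]
    simp only [MvPolynomial.coeff_monomial]
    exact Finset.sum_ite_eq' S j _
  have hsupp : (initForm f b).support = S := by
    ext j
    rw [MvPolynomial.mem_support_iff, hcoeff]
    constructor
    · intro hj; by_contra hj'; simp [hj'] at hj
    · intro hj
      simp only [hj, if_true]
      exact hpc j (Finset.mem_filter.1 hj).1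
  have hmem : b ∈ tropSet f ↔ 1 < S.card := by
    rw [Finset.one_lt_card]
    constructor
    · rintro ⟨i, hi, j, hj, hij, hwi, hwj⟩
      exact ⟨i, Finset.mem_filter.2 ⟨hi, hwi⟩, j, Finset.mem_filter.2 ⟨hj, hwj⟩, hij⟩
    · rintro ⟨i, hi, j, hj, hij⟩
      obtain ⟨hi1, hi2⟩ := Finset.mem_filter.1 hi
      obtain ⟨hj1, hj2⟩ := Finset.mem_filter.1 hj
      exact ⟨i, hi1, j, hj1, hij, hi2, hj2⟩
  have hSne : S.Nonempty := by
    obtain ⟨i, hi, hinf⟩ := Finset.exists_mem_eq_inf f.support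
      (MvPolynomial.support_nonempty.2 hf) (fun i => ((wt f b i : WithTop ℚ)))
    exact ⟨i, Finset.mem_filter.2 ⟨hi, hinf.symm⟩⟩
  have h12 : b ∈ tropSet f ↔ 1 < (initForm f b).support.card := by
    rw [hsupp]; exact hmem
  refine ⟨h12, ?_⟩
  rw [h12]
  constructor
  · exact fun h => exists_torus_root _ h
  · rintro ⟨γ, hγ, hev⟩
    by_contra hcard
    have h1 : S.card = 1 := by
      rw [hsupp] at hcard
      have := hSne.card_pos
      omega
    obtain ⟨i₀, hi0⟩ := Finset.card_eq_one.1 h1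
    have hi0mem : i₀ ∈ S := hi0 ▸ Finset.mem_singleton_self i₀
    have hform : initForm f b = MvPolynomial.monomial i₀ (pc (f.coeff i₀)) := by
      rw [initForm, ← hS, hi0, Finset.sum_singleton]
    rw [hform, MvPolynomial.eval_monomial] at hev
    refine absurd hev (mul_ne_zero (hpc i₀ (Finset.mem_filter.1 hi0mem).1) ?_)
    rw [Finsupp.prod]
    exact Finset.prod_ne_zero_iff.2 fun m _ => pow_ne_zero _ (hγ m)
end
end

section
/- (Easy direction of extended Kapranov.) Let f̃ ∈ K[x₁,…,x_n] be a polynomial over the field K of Puiseux series, and let b̃ = (b̃₁,…,b̃_n) ∈ (K*)ⁿ be a root of f̃. Set b_j = o(b̃_j) and γ_j = pc(b̃_j). Then b = (b₁,…,b_n) lies in the tropical hypersurface 𝒯(f), and the initial form f̃_b satisfies f̃_b(γ₁,…,γ_n) = 0. -/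
noncomputable section

lemma pc_mul {a b : K} (ha : a ≠ 0) (hb : b ≠ 0) : pc (a * b) = pc a * pc b := by
  unfold pc
  have hl : ∀ x : K, x ≠ 0 → x.leadingCoeff = x.coeff x.order := fun x hx => by
    rw [← HahnSeries.coeff_untop_eq_leadingCoeff (HahnSeries.orderTop_ne_top.2 hx)]
    congr 1
    rw [WithTop.untop_eq_iff, HahnSeries.order_eq_orderTop_of_ne_zero hx]
  rw [HahnSeries.order_mul ha hb, HahnSeries.coeff_mul_order_add_order, hl a ha, hl b hb]

lemma pc_one : pc (1 : K) = 1 := by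
  simp [pc, HahnSeries.order_one, HahnSeries.coeff_one]

lemma pc_pow {a : K} (ha : a ≠ 0) (k : ℕ) : pc (a ^ k) = pc a ^ k := by
  induction k with
  | zero => simpa using pc_one
  | succ k IH => rw [pow_succ, pc_mul (pow_ne_zero _ ha) ha, IH, pow_succ]

lemma order_prod_pc_prod {ι : Type*} (s : Finset ι) (g : ι → K)
    (h : ∀ j ∈ s, g j ≠ 0) :
    (∏ j ∈ s, g j).order = ∑ j ∈ s, (g j).order ∧
      pc (∏ j ∈ s, g j) = ∏ j ∈ s, pc (g j) := by
  induction s using Finset.cons_induction with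
  | empty => simpa using pc_one
  | cons a s has IH =>
      have ha : g a ≠ 0 := h a (Finset.mem_cons_self a s)
      have hs : ∀ j ∈ s, g j ≠ 0 := fun j hj => h j (Finset.mem_cons_of_mem hj)
      have hprod : (∏ j ∈ s, g j) ≠ 0 := Finset.prod_ne_zero_iff.mpr hs
      obtain ⟨IH1, IH2⟩ := IH hs
      rw [Finset.prod_cons, Finset.prod_cons, Finset.sum_cons,
        HahnSeries.order_mul ha hprod, IH1, pc_mul ha hprod, IH2]
      exact ⟨rfl, rfl⟩

/-- Easy direction of extended Kapranov: if `x ∈ (K*)ⁿ` is a root of the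
nonzero polynomial `f`, then the vector of orders `b` lies in the tropical
hypersurface `𝒯(f)` and the vector of principal coefficients is a root of the
initial form `f̃_b`. -/
theorem kapranov_easy_direction (n : ℕ) (f : MvPolynomial (Fin n) K)
    (hf : f ≠ 0) (x : Fin n → K) (hx : ∀ j, x j ≠ 0)
    (hroot : MvPolynomial.eval x f = 0) :
    (fun j => (x j).order) ∈ tropSet f ∧
      MvPolynomial.eval (fun j => pc (x j))
        (initForm f fun j => (x j).order) = 0 := by
  set b : Fin n → ℚ := fun j => (x j).order with hb
  set T : (Fin n →₀ ℕ) → K := fun i => f.coeff i * ∏ j, x j ^ i j with hT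
  -- facts about each term
  have hprodne : ∀ i : Fin n →₀ ℕ, (∏ j, x j ^ i j) ≠ 0 := fun i =>
    Finset.prod_ne_zero_iff.mpr fun j _ => pow_ne_zero _ (hx j)
  have hTne : ∀ i ∈ f.support, T i ≠ 0 := fun i hi =>
    mul_ne_zero (MvPolynomial.mem_support_iff.mp hi) (hprodne i)
  have hordprod : ∀ i : Fin n →₀ ℕ,
      (∏ j, x j ^ i j).order = ∑ j, (i j : ℚ) * b j := by
    intro i
    have := (order_prod_pc_prod Finset.univ (fun j => x j ^ i j)
      (fun j _ => pow_ne_zero _ (hx j))).1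
    rw [this]
    refine Finset.sum_congr rfl fun j _ => ?_
    rw [HahnSeries.order_pow, nsmul_eq_mul]
  have hpcprod : ∀ i : Fin n →₀ ℕ,
      pc (∏ j, x j ^ i j) = ∏ j, pc (x j) ^ i j := by
    intro i
    have := (order_prod_pc_prod Finset.univ (fun j => x j ^ i j)
      (fun j _ => pow_ne_zero _ (hx j))).2
    rw [this]
    exact Finset.prod_congr rfl fun j _ => pc_pow (hx j) _
  have hTord : ∀ i ∈ f.support, (T i).order = wt f b i := by
    intro i hi
    rw [hT, HahnSeries.order_mul (MvPolynomial.mem_support_iff.mp hi) (hprodne i),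
      hordprod i, wt]
  have hTpc : ∀ i ∈ f.support, pc (T i) = pc (f.coeff i) * ∏ j, pc (x j) ^ i j := by
    intro i hi
    rw [hT, pc_mul (MvPolynomial.mem_support_iff.mp hi) (hprodne i), hpcprod i]
  -- the minimum
  have hsupp : f.support.Nonempty := MvPolynomial.support_nonempty.mpr hf
  obtain ⟨i₀, hi₀, hmin⟩ := Finset.exists_mem_eq_inf f.support hsupp
    (fun i => (wt f b i : WithTop ℚ))
  have htrop : trop f b = (wt f b i₀ : WithTop ℚ) := hmin
  set m : ℚ := wt f b i₀ with hm
  have hle : ∀ i ∈ f.support, m ≤ wt f b i := by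
    intro i hi
    have : trop f b ≤ (wt f b i : WithTop ℚ) := Finset.inf_le hi
    rw [htrop] at this
    exact_mod_cast this
  -- membership of the filter
  have hfilter : ∀ i, (i ∈ f.support.filter fun i => (wt f b i : WithTop ℚ) = trop f b)
      ↔ i ∈ f.support ∧ wt f b i = m := by
    intro i
    rw [Finset.mem_filter, htrop]
    constructor
    · rintro ⟨h1, h2⟩; exact ⟨h1, by exact_mod_cast h2⟩
    · rintro ⟨h1, h2⟩; exact ⟨h1, by exact_mod_cast h2⟩
  set S := f.support.filter fun i => (wt f b i : WithTop ℚ) = trop f b with hS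
  have hi₀S : i₀ ∈ S := (hfilter i₀).mpr ⟨hi₀, rfl⟩
  -- coefficient of the evaluation at m
  have heval : MvPolynomial.eval x f = ∑ i ∈ f.support, T i :=
    MvPolynomial.eval_eq' x f
  have hcoeff : (0 : ℂ) = ∑ i ∈ f.support, (T i).coeff m := by
    have := congrArg (fun y : K => y.coeff m) (heval ▸ hroot)
    simpa using (this.symm.trans
      (map_sum (HahnSeries.coeff.addMonoidHom m) T f.support))
  have hzero : ∀ i ∈ f.support, i ∉ S → (T i).coeff m = 0 := by
    intro i hi hiS
    have hne : wt f b i ≠ m := fun h => hiS ((hfilter i).mpr ⟨hi, h⟩)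
    have hlt : m < (T i).order := by
      rw [hTord i hi]
      exact lt_of_le_of_ne (hle i hi) (Ne.symm hne)
    exact HahnSeries.coeff_eq_zero_of_lt_order hlt
  have hsumS : (0 : ℂ) = ∑ i ∈ S, pc (T i) := by
    rw [hcoeff, ← Finset.sum_filter_add_sum_filter_not f.support
      (fun i => (wt f b i : WithTop ℚ) = trop f b) (fun i => (T i).coeff m)]
    have h2 : ∑ i ∈ f.support.filter (fun i => ¬ (wt f b i : WithTop ℚ) = trop f b),
        (T i).coeff m = 0 := by
      refine Finset.sum_eq_zero fun i hi => ?_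
      rw [Finset.mem_filter] at hi
      exact hzero i hi.1 (fun h => hi.2 (Finset.mem_filter.mp h).2)
    rw [h2, add_zero]
    refine Finset.sum_congr rfl fun i hi => ?_
    obtain ⟨hi1, hi2⟩ := (hfilter i).mp hi
    rw [pc, hTord i hi1, hi2]
  -- evaluation of the initial form
  have hevalinit : MvPolynomial.eval (fun j => pc (x j)) (initForm f b)
      = ∑ i ∈ S, pc (T i) := by
    rw [initForm, map_sum]
    refine Finset.sum_congr rfl fun i hi => ?_
    obtain ⟨hi1, _⟩ := (hfilter i).mp hi
    rw [MvPolynomial.eval_monomial, hTpc i hi1, Finsupp.prod_pow]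
  refine ⟨?_, by rw [hevalinit, ← hsumS]⟩
  -- the minimum is attained twice
  by_contra hcon
  have honly : ∀ i ∈ S, i = i₀ := by
    intro i hi
    by_contra hne
    obtain ⟨hi1, hi2⟩ := Finset.mem_filter.mp hi
    obtain ⟨h1, h2⟩ := Finset.mem_filter.mp hi₀S
    exact hcon ⟨i, hi1, i₀, h1, hne, hi2, h2⟩
  have hSeq : S = {i₀} := Finset.eq_singleton_iff_unique_mem.mpr ⟨hi₀S, honly⟩
  have : (0 : ℂ) = pc (T i₀) := by rw [hsumS, hSeq, Finset.sum_singleton]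
  exact (hTne i₀ hi₀) (HahnSeries.coeff_order_eq_zero.mp this.symm)
end
end

section
/- (Extended Kapranov theorem / multivariate Newton–Puiseux lifting.) Let f̃ = Σ_{i∈I} ã_i x^i ∈ K[x₁,…,x_n] be a polynomial over the field K of Puiseux series over ℂ. Given γ = (γ₁,…,γ_n) ∈ (ℂ*)ⁿ and b = (b₁,…,b_n) ∈ ℚⁿ, there exists a point b̃ = (b̃₁,…,b̃_n) ∈ (K*)ⁿ with f̃(b̃) = 0, o(b̃_j) = b_j and pc(b̃_j) = γ_j for all j, if and only if b ∈ 𝒯(f) and f̃_b(γ₁,…,γ_n) = 0. -/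
noncomputable section

theorem HahnSeries.coeff_order_ne_zero {x : K} (hx : x ≠ 0) : x.coeff x.order ≠ 0 := by
  rw [← HahnSeries.leadingCoeff_eq]; exact HahnSeries.leadingCoeff_ne_zero.mpr hx

theorem HahnSeries.orderTop_add_orderTop_le_orderTop_mul {x y : K} :
    x.orderTop + y.orderTop ≤ (x * y).orderTop := HahnSeries.orderTop_add_le_mul

namespace KapAux

open HahnSeries

lemma pc_eq (a : K) : pc a = a.leadingCoeff := HahnSeries.leadingCoeff_eq.symm

lemma pc_ne_zero {a : K} (ha : a ≠ 0) : pc a ≠ 0 :=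
  HahnSeries.coeff_order_ne_zero ha

lemma val_eq_order {z : K} (hz : z ≠ 0) : z.orderTop = (z.order : WithTop ℚ) := by
  rw [HahnSeries.orderTop_of_ne_zero hz, HahnSeries.order_of_ne hz]

lemma le_val_iff {z : K} {r : ℚ} : (↑r ≤ z.orderTop) ↔ ∀ q < r, z.coeff q = 0 := by
  constructor
  · intro h q hq
    exact HahnSeries.coeff_eq_zero_of_lt_orderTop (lt_of_lt_of_le (by exact_mod_cast hq) h)
  · intro h
    by_cases hz : z = 0
    · simp [hz]
    · rw [val_eq_order hz, WithTop.coe_le_coe]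
      by_contra hlt
      push_neg at hlt
      exact HahnSeries.coeff_order_ne_zero hz (h _ hlt)

lemma lt_val_of_coeff_zero {z : K} {q : ℚ} (h1 : (q : WithTop ℚ) ≤ z.orderTop)
    (h2 : z.coeff q = 0) : (q : WithTop ℚ) < z.orderTop := by
  rcases eq_or_ne z 0 with rfl | hz
  · simp
  · refine lt_of_le_of_ne h1 fun h => ?_
    rw [val_eq_order hz, WithTop.coe_eq_coe] at h
    exact HahnSeries.coeff_order_ne_zero hz (h ▸ h2)

lemma val_mul_ge {x y : K} {q r : ℚ} (hx : (q : WithTop ℚ) ≤ x.orderTop)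
    (hy : (r : WithTop ℚ) ≤ y.orderTop) : ((q + r : ℚ) : WithTop ℚ) ≤ (x * y).orderTop := by
  refine le_trans ?_ HahnSeries.orderTop_add_orderTop_le_orderTop_mul
  push_cast
  exact add_le_add hx hy

lemma val_pow_ge {x : K} {q : ℚ} (hx : (q : WithTop ℚ) ≤ x.orderTop) (k : ℕ) :
    (((k : ℚ) * q : ℚ) : WithTop ℚ) ≤ (x ^ k).orderTop := by
  induction k with
  | zero => simp [HahnSeries.orderTop_one]
  | succ k ih =>
      rw [pow_succ]
      have := val_mul_ge ih hx
      convert this using 2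
      push_cast; ring

lemma val_sum_ge {ι : Type*} (s : Finset ι) (F : ι → K) (q : ℚ)
    (h : ∀ i ∈ s, (q : WithTop ℚ) ≤ (F i).orderTop) :
    (q : WithTop ℚ) ≤ (∑ i ∈ s, F i).orderTop := by
  classical
  induction s using Finset.cons_induction with
  | empty => simp
  | cons a s ha ih =>
      rw [Finset.sum_cons]
      refine le_trans ?_ HahnSeries.min_orderTop_le_orderTop_add
      exact le_min (h a (Finset.mem_cons_self a s))
        (ih fun i hi => h i (Finset.mem_cons_of_mem hi))

lemma coeff_sum {ι : Type*} (s : Finset ι) (F : ι → K) (q : ℚ) :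
    (∑ i ∈ s, F i).coeff q = ∑ i ∈ s, (F i).coeff q :=
  map_sum (HahnSeries.coeff.addMonoidHom (R := ℂ) q) F s

lemma pc_single (r : ℚ) (d : ℂ) : pc (HahnSeries.single r d) = d := by
  by_cases hd : d = 0
  · simp [hd, pc]
  · rw [pc, HahnSeries.order_single hd, HahnSeries.coeff_single_same]

lemma single_zero_one : (HahnSeries.single (0:ℚ) (1:ℂ)) = 1 := rfl

lemma single_pow (r : ℚ) (d : ℂ) (k : ℕ) :
    (HahnSeries.single r d) ^ k = HahnSeries.single ((k : ℚ) * r) (d ^ k) := by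
  induction k with
  | zero => simp [single_zero_one]
  | succ k ih =>
      rw [pow_succ, ih, HahnSeries.single_mul_single, pow_succ]
      congr 1
      push_cast; ring

lemma prod_single {ι : Type*} (s : Finset ι) (a : ι → ℚ) (v : ι → ℂ) :
    (∏ i ∈ s, HahnSeries.single (a i) (v i)) =
      HahnSeries.single (∑ i ∈ s, a i) (∏ i ∈ s, v i) := by
  classical
  induction s using Finset.cons_induction with
  | empty => simp [single_zero_one]
  | cons a' s ha ih =>
      rw [Finset.prod_cons, Finset.sum_cons, Finset.prod_cons, ih,
        HahnSeries.single_mul_single]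

lemma coeff_mul_single (c : K) (s : ℚ) (w : ℂ) :
    (c * HahnSeries.single s w).coeff (c.order + s) = pc c * w := by
  rcases eq_or_ne c 0 with rfl | hc
  · simp [pc]
  rcases eq_or_ne w 0 with rfl | hw
  · simp [pc]
  have := HahnSeries.coeff_mul_order_add_order c (HahnSeries.single s w)
  rw [HahnSeries.order_single hw] at this
  rw [this, pc_eq]
  congr 1
  rw [HahnSeries.leadingCoeff_eq, HahnSeries.order_single hw, HahnSeries.coeff_single_same]

lemma val_C (z : ℂ) : (0 : WithTop ℚ) ≤ (HahnSeries.C z : K).orderTop := by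
  rcases eq_or_ne z 0 with rfl | hz
  · simp
  · rw [HahnSeries.C_apply, ← WithTop.coe_zero, val_eq_order (HahnSeries.single_ne_zero hz),
      HahnSeries.order_single hz]

lemma pc_C (z : ℂ) : pc (HahnSeries.C z) = z := by
  rw [HahnSeries.C_apply, pc_single]

lemma lc_mul {x y : K} (hx : x ≠ 0) (hy : y ≠ 0) :
    (x * y).leadingCoeff = x.leadingCoeff * y.leadingCoeff := by
  rw [HahnSeries.leadingCoeff_eq, HahnSeries.order_mul hx hy,
    HahnSeries.coeff_mul_order_add_order]

lemma lc_pow (x : K) (hx : x ≠ 0) (m : ℕ) :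
    (x ^ m).leadingCoeff = x.leadingCoeff ^ m := by
  induction m with
  | zero => simpa using HahnSeries.leadingCoeff_one
  | succ m ih => rw [pow_succ, lc_mul (pow_ne_zero m hx) hx, ih, pow_succ]

lemma lc_prod {ι : Type*} (s : Finset ι) (v : ι → K) (h : ∀ i ∈ s, v i ≠ 0) :
    (∏ i ∈ s, v i).leadingCoeff = ∏ i ∈ s, (v i).leadingCoeff := by
  classical
  induction s using Finset.cons_induction with
  | empty => simpa using HahnSeries.leadingCoeff_one
  | cons a s ha ih =>
    rw [Finset.prod_cons, Finset.prod_cons,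
      lc_mul (h a (Finset.mem_cons_self a s))
        (Finset.prod_ne_zero_iff.2 fun i hi => h i (Finset.mem_cons_of_mem hi)),
      ih fun i hi => h i (Finset.mem_cons_of_mem hi)]

lemma order_prod {ι : Type*} (s : Finset ι) (v : ι → K) (h : ∀ i ∈ s, v i ≠ 0) :
    (∏ i ∈ s, v i).order = ∑ i ∈ s, (v i).order := by
  classical
  induction s using Finset.cons_induction with
  | empty => simpa using HahnSeries.order_one
  | cons a s ha ih =>
    rw [Finset.prod_cons, Finset.sum_cons,
      HahnSeries.order_mul (h a (Finset.mem_cons_self a s))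
        (Finset.prod_ne_zero_iff.2 fun i hi => h i (Finset.mem_cons_of_mem hi)),
      ih fun i hi => h i (Finset.mem_cons_of_mem hi)]


-- the "trinomial revision" identity
lemma trin (i l m : ℕ) : i.choose l * (i - l).choose m
    = (l + m).choose m * i.choose (l + m) := by
  by_cases h1 : l + m ≤ i
  · have h2 : l ≤ i := le_trans (Nat.le_add_right l m) h1
    have h3 : m ≤ i - l := by omega
    have h4 : m ≤ l + m := Nat.le_add_left m l
    have e1 : i - l - m = i - (l + m) := by omega
    have : ((i.choose l * (i - l).choose m : ℕ) : ℚ)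
        = (((l + m).choose m * i.choose (l + m) : ℕ) : ℚ) := by
      push_cast
      rw [Nat.cast_choose ℚ h2, Nat.cast_choose ℚ h3, Nat.cast_choose ℚ h4,
        Nat.cast_choose ℚ h1, e1]
      have hh : (l + m) - m = l := by omega
      rw [hh]
      have f1 : ((l.factorial : ℚ)) ≠ 0 := Nat.cast_ne_zero.2 (Nat.factorial_ne_zero l)
      have f2 : ((m.factorial : ℚ)) ≠ 0 := Nat.cast_ne_zero.2 (Nat.factorial_ne_zero m)
      have f3 : (((i - l).factorial : ℚ)) ≠ 0 := Nat.cast_ne_zero.2 (Nat.factorial_ne_zero _)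
      have f4 : (((i - (l + m)).factorial : ℚ)) ≠ 0 := Nat.cast_ne_zero.2 (Nat.factorial_ne_zero _)
      have f5 : (((l + m).factorial : ℚ)) ≠ 0 := Nat.cast_ne_zero.2 (Nat.factorial_ne_zero _)
      have f6 : ((i.factorial : ℚ)) ≠ 0 := Nat.cast_ne_zero.2 (Nat.factorial_ne_zero _)
      field_simp
    exact_mod_cast this
  · have hz : i.choose (l + m) = 0 := Nat.choose_eq_zero_of_lt (by omega)
    rcases Nat.lt_or_ge i l with hl | hl
    · rw [Nat.choose_eq_zero_of_lt hl, hz]; ring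
    · have : i - l < m := by omega
      rw [Nat.choose_eq_zero_of_lt this, hz]; ring

end KapAux

namespace Kap

open KapAux HahnSeries
open scoped Classical

variable {n : ℕ}

/-- Degree bound. -/
def NB (f : MvPolynomial (Fin n) K) : ℕ := f.totalDegree

/-- The box of multi-indices. -/
def box (f : MvPolynomial (Fin n) K) : Finset (Fin n → ℕ) :=
  Fintype.piFinset fun _ => Finset.range (NB f + 1)

def chi (i : Fin n →₀ ℕ) (L : Fin n → ℕ) : ℂ := ((∏ j, (i j).choose (L j) : ℕ) : ℂ)

def chi2 (L M : Fin n → ℕ) : ℂ := ((∏ j, (L j + M j).choose (M j) : ℕ) : ℂ)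

/-- Multivariate Hasse–Taylor coefficient of `f` at `x`. -/
def cc (f : MvPolynomial (Fin n) K) (L : Fin n → ℕ) (x : Fin n → K) : K :=
  ∑ i ∈ f.support, HahnSeries.C (chi i L) * f.coeff i * ∏ j, (x j) ^ (i j - L j)

lemma mem_box {f : MvPolynomial (Fin n) K} {L : Fin n → ℕ} :
    L ∈ box f ↔ ∀ j, L j ≤ NB f := by
  simp [box, Nat.lt_succ_iff]

lemma supp_bound {f : MvPolynomial (Fin n) K} {i : Fin n →₀ ℕ}
    (hi : i ∈ f.support) (j : Fin n) : i j ≤ NB f := by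
  refine le_trans ?_ (MvPolynomial.le_totalDegree hi)
  by_cases hj : j ∈ i.support
  · exact Finset.single_le_sum (f := fun a => i a) (fun a _ => Nat.zero_le _) hj
  · simp [Finsupp.notMem_support_iff.1 hj]

lemma supp_mem_box {f : MvPolynomial (Fin n) K} {i : Fin n →₀ ℕ}
    (hi : i ∈ f.support) : (i : Fin n → ℕ) ∈ box f :=
  mem_box.2 fun j => supp_bound hi j

lemma cc_zero (f : MvPolynomial (Fin n) K) (x : Fin n → K) :
    cc f 0 x = MvPolynomial.eval x f := by
  rw [MvPolynomial.eval_eq', cc]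
  refine Finset.sum_congr rfl fun i _ => ?_
  have : chi i 0 = 1 := by simp [chi]
  simp [this]

lemma cc_vanish {f : MvPolynomial (Fin n) K} {L : Fin n → ℕ} (x : Fin n → K)
    (h : ∀ i ∈ f.support, ∃ j, i j < L j) : cc f L x = 0 := by
  rw [cc]
  refine Finset.sum_eq_zero fun i hi => ?_
  obtain ⟨j, hj⟩ := h i hi
  have : chi i L = 0 := by
    rw [chi]
    norm_cast
    exact Finset.prod_eq_zero (Finset.mem_univ j) (Nat.choose_eq_zero_of_lt hj)
  simp [this]

lemma box_of_cc_ne {f : MvPolynomial (Fin n) K} {L : Fin n → ℕ} {x : Fin n → K}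
    (h : cc f L x ≠ 0) : L ∈ box f := by
  by_contra hL
  rw [mem_box] at hL
  push_neg at hL
  obtain ⟨j, hj⟩ := hL
  exact h (cc_vanish x fun i hi => ⟨j, lt_of_le_of_lt (supp_bound hi j) hj⟩)

lemma natCast_eq_C (m : ℕ) : ((m : ℕ) : K) = HahnSeries.C ((m : ℕ) : ℂ) :=
  (map_natCast (HahnSeries.C : ℂ →+* K) m).symm

lemma binom_ext (u v : K) {p N : ℕ} (hp : p ≤ N) :
    (u + v) ^ p = ∑ k ∈ Finset.range (N + 1),
      ((p.choose k : ℕ) : K) * u ^ (p - k) * v ^ k := by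
  rw [add_comm u v, add_pow]
  rw [← Finset.sum_subset (Finset.range_subset_range.2 (Nat.succ_le_succ hp))
    (fun k _ hk => ?_)]
  · refine Finset.sum_congr rfl fun k _ => ?_
    ring
  · have : p < k := by
      rcases Nat.lt_or_ge p k with h | h
      · exact h
      · exact absurd (Finset.mem_range.2 (Nat.lt_succ_of_le h)) hk
    rw [Nat.choose_eq_zero_of_lt this]
    push_cast
    ring

lemma prod_choose_cast (i : Fin n →₀ ℕ) (L : Fin n → ℕ) :
    (∏ j, (((i j).choose (L j) : ℕ) : K)) = HahnSeries.C (chi i L) := by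
  rw [chi, ← Nat.cast_prod, natCast_eq_C, Nat.cast_prod]

/-- Multivariate Taylor expansion. -/
lemma cc_expand (f : MvPolynomial (Fin n) K) (x δ : Fin n → K) :
    MvPolynomial.eval (fun j => x j + δ j) f
      = ∑ L ∈ box f, cc f L x * ∏ j, (δ j) ^ (L j) := by
  classical
  rw [MvPolynomial.eval_eq']
  have key : ∀ i ∈ f.support, (∏ j, (x j + δ j) ^ (i j))
      = ∑ L ∈ box f, HahnSeries.C (chi i L)
          * (∏ j, (x j) ^ (i j - L j)) * ∏ j, (δ j) ^ (L j) := by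
    intro i hi
    have step1 : (∏ j, (x j + δ j) ^ (i j))
        = ∏ j, ∑ k ∈ Finset.range (NB f + 1),
            (((i j).choose k : ℕ) : K) * (x j) ^ (i j - k) * (δ j) ^ k :=
      Finset.prod_congr rfl fun j _ => binom_ext _ _ (supp_bound hi j)
    rw [step1, Finset.prod_univ_sum]
    refine Finset.sum_congr rfl fun L _ => ?_
    rw [Finset.prod_mul_distrib, Finset.prod_mul_distrib, prod_choose_cast]
  calc (∑ i ∈ f.support, MvPolynomial.coeff i f * ∏ j, (x j + δ j) ^ (i j))
      = ∑ i ∈ f.support, ∑ L ∈ box f, MvPolynomial.coeff i f *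
          (HahnSeries.C (chi i L) * (∏ j, (x j) ^ (i j - L j)) * ∏ j, (δ j) ^ (L j)) := by
        refine Finset.sum_congr rfl fun i hi => ?_
        rw [key i hi, Finset.mul_sum]
    _ = ∑ L ∈ box f, ∑ i ∈ f.support, MvPolynomial.coeff i f *
          (HahnSeries.C (chi i L) * (∏ j, (x j) ^ (i j - L j)) * ∏ j, (δ j) ^ (L j)) :=
        Finset.sum_comm
    _ = ∑ L ∈ box f, cc f L x * ∏ j, (δ j) ^ (L j) := by
        refine Finset.sum_congr rfl fun L _ => ?_
        rw [cc, Finset.sum_mul]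
        refine Finset.sum_congr rfl fun i _ => ?_
        ring

/-- Two-point (composition) identity for the Taylor coefficients. -/
lemma cc_shift (f : MvPolynomial (Fin n) K) (L : Fin n → ℕ) (x x' : Fin n → K) :
    cc f L x' = ∑ M ∈ box f, HahnSeries.C (chi2 L M)
      * cc f (fun j => L j + M j) x * ∏ j, (x' j - x j) ^ (M j) := by
  classical
  set δ : Fin n → K := fun j => x' j - x j with hδ
  have hx' : ∀ j, x' j = x j + δ j := fun j => by simp [hδ]
  have key : ∀ i ∈ f.support, (∏ j, (x' j) ^ (i j - L j))
      = ∑ M ∈ box f, (∏ j, (((i j - L j).choose (M j) : ℕ) : K))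
          * (∏ j, (x j) ^ (i j - L j - M j)) * ∏ j, (δ j) ^ (M j) := by
    intro i hi
    have step1 : (∏ j, (x' j) ^ (i j - L j))
        = ∏ j, ∑ k ∈ Finset.range (NB f + 1),
            (((i j - L j).choose k : ℕ) : K) * (x j) ^ (i j - L j - k) * (δ j) ^ k :=
      Finset.prod_congr rfl fun j _ => by
        rw [hx' j]
        exact binom_ext _ _ (le_trans (Nat.sub_le _ _) (supp_bound hi j))
    rw [step1, Finset.prod_univ_sum]
    refine Finset.sum_congr rfl fun M _ => ?_
    rw [Finset.prod_mul_distrib, Finset.prod_mul_distrib]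
  have scalar : ∀ (i : Fin n →₀ ℕ) (M : Fin n → ℕ),
      chi i L * (∏ j, ((i j - L j).choose (M j) : ℂ))
        = chi2 L M * chi i (fun j => L j + M j) := by
    intro i M
    rw [chi, chi2, chi]
    push_cast
    rw [← Finset.prod_mul_distrib, ← Finset.prod_mul_distrib]
    refine Finset.prod_congr rfl fun j _ => ?_
    norm_cast
    exact trin (i j) (L j) (M j)
  calc cc f L x'
      = ∑ i ∈ f.support, HahnSeries.C (chi i L) * MvPolynomial.coeff i f
          * ∏ j, (x' j) ^ (i j - L j) := rfl
    _ = ∑ i ∈ f.support, ∑ M ∈ box f, HahnSeries.C (chi i L) * MvPolynomial.coeff i f *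
          ((∏ j, (((i j - L j).choose (M j) : ℕ) : K))
            * (∏ j, (x j) ^ (i j - L j - M j)) * ∏ j, (δ j) ^ (M j)) := by
        refine Finset.sum_congr rfl fun i hi => ?_
        rw [key i hi, Finset.mul_sum]
    _ = ∑ M ∈ box f, ∑ i ∈ f.support, HahnSeries.C (chi i L) * MvPolynomial.coeff i f *
          ((∏ j, (((i j - L j).choose (M j) : ℕ) : K))
            * (∏ j, (x j) ^ (i j - L j - M j)) * ∏ j, (δ j) ^ (M j)) := Finset.sum_comm
    _ = ∑ M ∈ box f, HahnSeries.C (chi2 L M)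
          * cc f (fun j => L j + M j) x * ∏ j, (δ j) ^ (M j) := by
        refine Finset.sum_congr rfl fun M _ => ?_
        rw [cc, Finset.mul_sum, Finset.sum_mul]
        refine Finset.sum_congr rfl fun i _ => ?_
        have e1 : (∏ j, (((i j - L j).choose (M j) : ℕ) : K))
            = HahnSeries.C (∏ j, ((i j - L j).choose (M j) : ℂ)) := by
          rw [← Nat.cast_prod, natCast_eq_C, Nat.cast_prod]
        have e2 : ∀ j, i j - L j - M j = i j - (L j + M j) := fun j => Nat.sub_sub _ _ _
        have e3 : (∏ j, (x j) ^ (i j - L j - M j)) = ∏ j, (x j) ^ (i j - (L j + M j)) :=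
          Finset.prod_congr rfl fun j _ => by rw [e2 j]
        rw [e1, e3]
        have := scalar i M
        calc HahnSeries.C (chi i L) * MvPolynomial.coeff i f *
              (HahnSeries.C (∏ j, ((i j - L j).choose (M j) : ℂ))
                * (∏ j, (x j) ^ (i j - (L j + M j))) * ∏ j, (δ j) ^ (M j))
            = HahnSeries.C (chi i L * ∏ j, ((i j - L j).choose (M j) : ℂ))
                * MvPolynomial.coeff i f *
                ((∏ j, (x j) ^ (i j - (L j + M j))) * ∏ j, (δ j) ^ (M j)) := by
              rw [map_mul]; ring
          _ = HahnSeries.C (chi2 L M * chi i (fun j => L j + M j))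
                * MvPolynomial.coeff i f *
                ((∏ j, (x j) ^ (i j - (L j + M j))) * ∏ j, (δ j) ^ (M j)) := by rw [this]
          _ = HahnSeries.C (chi2 L M) *
                (HahnSeries.C (chi i (fun j => L j + M j)) * MvPolynomial.coeff i f
                  * ∏ j, (x j) ^ (i j - (L j + M j))) * ∏ j, (δ j) ^ (M j) := by
              rw [map_mul]; ring


/-- Spherical completeness of `K`, in the form needed for chains of balls. -/
lemma spherical {ι : Type*} (s : ι → K) (ρ : ι → ℚ)
    (hagree : ∀ i i' q, q < ρ i → q < ρ i' → (s i).coeff q = (s i').coeff q) :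
    ∃ u : K, ∀ i, ∀ q < ρ i, u.coeff q = (s i).coeff q := by
  classical
  set F : ℚ → ℂ := fun q => if h : ∃ i, q < ρ i then (s h.choose).coeff q else 0 with hF
  have hcons : ∀ (i : ι) (q : ℚ), q < ρ i → F q = (s i).coeff q := by
    intro i q hq
    have hex : ∃ i', q < ρ i' := ⟨i, hq⟩
    simp only [hF, dif_pos hex]
    exact hagree hex.choose i q hex.choose_spec hq
  have hwf : (Function.support F).IsWF := by
    rw [Set.isWF_iff_no_descending_seq]
    intro g hg hmem
    have h0 : F (g 0) ≠ 0 := hmem 0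
    have hex : ∃ i', g 0 < ρ i' := by
      by_contra h
      exact h0 (by simp only [hF, dif_neg h])
    obtain ⟨i₀, hi₀⟩ := hex
    refine Set.isWF_iff_no_descending_seq.1 (s i₀).isWF_support g hg fun m => ?_
    have hlt : g m < ρ i₀ := lt_of_le_of_lt (hg.antitone (Nat.zero_le m)) hi₀
    have := hcons i₀ (g m) hlt
    have hne : (s i₀).coeff (g m) ≠ 0 := by
      rw [← this]; exact hmem m
    exact hne
  refine ⟨⟨F, hwf.isPWO⟩, fun i q hq => ?_⟩
  exact hcons i q hq

lemma val_prod_ge {ι : Type*} (t : Finset ι) (z : ι → K) (r : ι → ℚ)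
    (h : ∀ j ∈ t, ((r j : ℚ) : WithTop ℚ) ≤ (z j).orderTop) :
    ((∑ j ∈ t, r j : ℚ) : WithTop ℚ) ≤ (∏ j ∈ t, z j).orderTop := by
  classical
  induction t using Finset.cons_induction with
  | empty => simp [HahnSeries.orderTop_one]
  | cons a t ha ih =>
      rw [Finset.prod_cons, Finset.sum_cons]
      exact val_mul_ge (h a (Finset.mem_cons_self a t))
        (ih fun j hj => h j (Finset.mem_cons_of_mem hj))

lemma ne_zero_of_orderTop_lt {z w : K} (h : z.orderTop < w.orderTop) : z ≠ 0 := by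
  intro hz
  rw [hz] at h
  simp only [HahnSeries.orderTop_zero] at h
  exact not_top_lt h

/-- helper for the final extraction -/
lemma order_pc_of_single_add {r : ℚ} {d : ℂ} (hd : d ≠ 0) {w : K}
    (hw : (r : WithTop ℚ) < w.orderTop) :
    HahnSeries.single r d + w ≠ 0 ∧ (HahnSeries.single r d + w).order = r ∧
      pc (HahnSeries.single r d + w) = d := by
  have hco : ∀ q < r, (HahnSeries.single r d + w).coeff q = 0 := by
    intro q hq
    rw [HahnSeries.coeff_add, HahnSeries.coeff_single_of_ne (ne_of_lt hq),
      HahnSeries.coeff_eq_zero_of_lt_orderTop (lt_trans (by exact_mod_cast hq) hw)]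
    ring
  have hcr : (HahnSeries.single r d + w).coeff r = d := by
    rw [HahnSeries.coeff_add, HahnSeries.coeff_single_same,
      HahnSeries.coeff_eq_zero_of_lt_orderTop hw, add_zero]
  have hne : HahnSeries.single r d + w ≠ 0 := fun h => hd (by rw [← hcr, h]; simp)
  have hot : (HahnSeries.single r d + w).orderTop = (r : WithTop ℚ) := by
    refine HahnSeries.orderTop_eq_of_le ?_ ?_
    · rw [HahnSeries.mem_support, hcr]; exact hd
    · intro g' hg'
      by_contra hlt
      push_neg at hlt
      exact (HahnSeries.mem_support _ _).1 hg' (hco g' hlt)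
  have hor : (HahnSeries.single r d + w).order = r := by
    have := val_eq_order hne
    rw [hot] at this
    exact_mod_cast this.symm
  exact ⟨hne, hor, by rw [pc, hor, hcr]⟩

variable (f : MvPolynomial (Fin n) K) (b : Fin n → ℚ)

/-- The (rational) order of the value of `f` at `x` (junk if the value is `0`). -/
def Vq (x : Fin n → K) : ℚ := (MvPolynomial.eval x f).order

def wtL (L : Fin n → ℕ) : ℚ := ∑ j, (L j : ℚ) * b j

def tot (L : Fin n → ℕ) : ℕ := ∑ j, L j

def slope (x : Fin n → K) (L : Fin n → ℕ) : ℚ :=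
  (Vq f x - (cc f L x).order - wtL b L) / (tot L)

/-- Candidate multi-indices at `x`. -/
def Scand (x : Fin n → K) : Finset (Fin n → ℕ) :=
  (box f).filter fun L => L ≠ 0 ∧ cc f L x ≠ 0

/-- The critical exponent at `x`. -/
def eps (x : Fin n → K) : ℚ :=
  if h : (Scand f x).Nonempty then ((Scand f x).image (slope f b x)).max' (h.image _) else 0

lemma tot_pos {L : Fin n → ℕ} (hL : L ≠ 0) : 0 < tot L := by
  rcases Function.ne_iff.1 hL with ⟨j, hj⟩
  have : 0 < L j := Nat.pos_of_ne_zero (by simpa using hj)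
  exact lt_of_lt_of_le this (Finset.single_le_sum (f := fun a => L a)
    (fun a _ => Nat.zero_le _) (Finset.mem_univ j))

lemma eps_ge (x : Fin n → K) {L : Fin n → ℕ} (hL : L ∈ Scand f x) :
    slope f b x L ≤ eps f b x := by
  rw [eps, dif_pos ⟨L, hL⟩]
  exact Finset.le_max' _ _ (Finset.mem_image_of_mem _ hL)

lemma eps_attained (x : Fin n → K) (h : (Scand f x).Nonempty) :
    ∃ L ∈ Scand f x, slope f b x L = eps f b x := by
  rw [eps, dif_pos h]
  have := Finset.max'_mem _ ((h.image (slope f b x)))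
  obtain ⟨L, hL, hLe⟩ := Finset.mem_image.1 this
  exact ⟨L, hL, hLe⟩

lemma ord_cc_ge {x : Fin n → K} {L : Fin n → ℕ} (hL : L ∈ Scand f x) {e : ℚ}
    (he : slope f b x L ≤ e) :
    Vq f x - wtL b L - (tot L : ℚ) * e ≤ (cc f L x).order := by
  have hpos : (0 : ℚ) < (tot L : ℚ) := by
    exact_mod_cast tot_pos ((Finset.mem_filter.1 hL).2.1)
  rw [slope, div_le_iff₀ hpos] at he
  nlinarith

lemma slope_ge_of_ord {x : Fin n → K} {L : Fin n → ℕ} (hL : L ∈ Scand f x) {e : ℚ}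
    (he : (cc f L x).order ≤ Vq f x - wtL b L - (tot L : ℚ) * e) :
    e ≤ slope f b x L := by
  have hpos : (0 : ℚ) < (tot L : ℚ) := by
    exact_mod_cast tot_pos ((Finset.mem_filter.1 hL).2.1)
  rw [slope, le_div_iff₀ hpos]
  nlinarith

lemma chi_self (i : Fin n →₀ ℕ) : chi i (i : Fin n → ℕ) = 1 := by
  rw [chi]
  norm_cast
  exact Finset.prod_eq_one fun j _ => Nat.choose_self _

lemma chi_eq_zero {i : Fin n →₀ ℕ} {L : Fin n → ℕ} (h : ∃ j, i j < L j) : chi i L = 0 := by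
  obtain ⟨j, hj⟩ := h
  rw [chi]
  norm_cast
  exact Finset.prod_eq_zero (Finset.mem_univ j) (Nat.choose_eq_zero_of_lt hj)

/-- A maximal support element above a nonzero one gives a constant Taylor coefficient. -/
lemma exists_const_cc (hf2 : ∃ i₁ ∈ f.support, (i₁ : Fin n →₀ ℕ) ≠ 0) :
    ∃ Kc : Fin n →₀ ℕ, Kc ∈ f.support ∧ (Kc : Fin n → ℕ) ≠ 0 ∧
      ∀ x : Fin n → K, cc f (Kc : Fin n → ℕ) x = f.coeff Kc := by
  classical
  obtain ⟨i₁, hi₁, hi₁0⟩ := hf2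
  set T : Finset (Fin n →₀ ℕ) := f.support.filter (fun i => i₁ ≤ i) with hT
  have hTne : T.Nonempty := ⟨i₁, Finset.mem_filter.2 ⟨hi₁, le_refl _⟩⟩
  obtain ⟨Kc, hKcT, hKcmax⟩ : ∃ m ∈ T, ∀ x ∈ T, ¬ m < x := by
    obtain ⟨m, hm⟩ := Finset.exists_maximal hTne
    exact ⟨m, hm.1, fun x hx hlt => hlt.not_ge (hm.2 hx hlt.le)⟩
  have hKsupp : Kc ∈ f.support := (Finset.mem_filter.1 hKcT).1
  have hKge : i₁ ≤ Kc := (Finset.mem_filter.1 hKcT).2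
  refine ⟨Kc, hKsupp, ?_, ?_⟩
  · intro h
    apply hi₁0
    ext j
    have := congrFun h j
    simp only [Pi.zero_apply] at this
    have h2 : i₁ j ≤ Kc j := hKge j
    simp only [Finsupp.coe_zero, Pi.zero_apply]
    omega
  · intro x
    rw [cc]
    rw [Finset.sum_eq_single_of_mem Kc hKsupp]
    · rw [chi_self]
      simp
    · intro i hi hne
      by_cases hle : ∀ j, Kc j ≤ i j
      · exfalso
        have hle' : Kc ≤ i := fun j => hle j
        have hiT : i ∈ T := Finset.mem_filter.2 ⟨hi, le_trans hKge hle'⟩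
        exact hKcmax i hiT (lt_of_le_of_ne hle' (fun h => hne h.symm))
      · push_neg at hle
        obtain ⟨j, hj⟩ := hle
        rw [chi_eq_zero ⟨j, hj⟩]
        simp


lemma zero_mem_box : (0 : Fin n → ℕ) ∈ box f := mem_box.2 fun _ => Nat.zero_le _

lemma scand_of (hbox : ∀ {L : Fin n → ℕ} {x}, cc f L x ≠ 0 → L ∈ box f) : True := trivial

/-- Newton improvement step. -/
lemma improve (hS : ∀ x : Fin n → K, (Scand f x).Nonempty) (x : Fin n → K)
    (hx : MvPolynomial.eval x f ≠ 0) :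
    ∃ y : Fin n → K,
      (MvPolynomial.eval x f).orderTop < (MvPolynomial.eval y f).orderTop ∧
      ∀ j, ((b j + eps f b x : ℚ) : WithTop ℚ) ≤ (y j - x j).orderTop := by
  classical
  set e := eps f b x with he
  set S := (Scand f x).filter (fun L => slope f b x L = e) with hSdef
  have hSne : S.Nonempty := by
    obtain ⟨L, hL, hsl⟩ := eps_attained f b x (hS x)
    exact ⟨L, Finset.mem_filter.2 ⟨hL, hsl⟩⟩
  have hSsub : ∀ {L}, L ∈ S → L ∈ Scand f x := fun hL => (Finset.mem_filter.1 hL).1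
  have hSne0 : ∀ {L}, L ∈ S → L ≠ 0 := fun hL =>
    (Finset.mem_filter.1 (hSsub hL)).2.1
  have hScc : ∀ {L}, L ∈ S → cc f L x ≠ 0 := fun hL =>
    (Finset.mem_filter.1 (hSsub hL)).2.2
  set m₀ := (S.image tot).max' (hSne.image _) with hm₀
  obtain ⟨L₀, hL₀S, hL₀tot⟩ := Finset.mem_image.1 (Finset.max'_mem _ (hSne.image tot))
  have hm₀pos : 0 < m₀ := by
    rw [hm₀, ← hL₀tot]
    exact tot_pos (hSne0 hL₀S)
  set Sm := S.filter (fun L => tot L = m₀) with hSm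
  have hL₀Sm : L₀ ∈ Sm := Finset.mem_filter.2 ⟨hL₀S, hL₀tot⟩
  set Qt : MvPolynomial (Fin n) ℂ :=
    ∑ L ∈ Sm, MvPolynomial.monomial (Finsupp.equivFunOnFinite.symm L) (pc (cc f L x))
    with hQt
  have hcoQt : MvPolynomial.coeff (Finsupp.equivFunOnFinite.symm L₀) Qt
      = pc (cc f L₀ x) := by
    rw [hQt, MvPolynomial.coeff_sum, Finset.sum_eq_single_of_mem L₀ hL₀Sm]
    · rw [MvPolynomial.coeff_monomial, if_pos rfl]
    · intro L hL hne
      rw [MvPolynomial.coeff_monomial, if_neg]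
      intro hEq
      exact hne (Finsupp.equivFunOnFinite.symm.injective hEq)
  have hQtne : Qt ≠ 0 := by
    intro h
    rw [h, MvPolynomial.coeff_zero] at hcoQt
    exact pc_ne_zero (hScc hL₀S) hcoQt.symm
  obtain ⟨u, hu⟩ : ∃ u : Fin n → ℂ, MvPolynomial.eval u Qt ≠ 0 := by
    by_contra h
    push_neg at h
    exact hQtne (MvPolynomial.funext fun v => by rw [h v, map_zero])
  have hQteval : ∀ v : Fin n → ℂ,
      MvPolynomial.eval v Qt = ∑ L ∈ Sm, pc (cc f L x) * ∏ j, (v j) ^ (L j) := by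
    intro v
    rw [hQt, map_sum]
    refine Finset.sum_congr rfl fun L _ => ?_
    rw [MvPolynomial.eval_monomial]
    congr 1
    rw [Finsupp.prod_pow]
    exact Finset.prod_congr rfl fun j _ => by
      rw [Finsupp.coe_equivFunOnFinite_symm]
  set ψ : Polynomial ℂ := Polynomial.C (pc (MvPolynomial.eval x f)) +
      ∑ L ∈ S, Polynomial.C (pc (cc f L x) * ∏ j, (u j) ^ (L j)) *
        Polynomial.X ^ (tot L) with hψ
  have hψcoeff : ψ.coeff m₀ = MvPolynomial.eval u Qt := by
    rw [hψ, Polynomial.coeff_add, Polynomial.coeff_C, if_neg (Nat.pos_iff_ne_zero.1 hm₀pos),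
      zero_add, Polynomial.finset_sum_coeff]
    simp_rw [Polynomial.coeff_C_mul, Polynomial.coeff_X_pow, mul_ite, mul_one, mul_zero]
    rw [hQteval u, ← Finset.sum_filter, hSm]
    congr 1
    ext a
    simp [eq_comm]
  have hψdeg : 0 < ψ.degree := by
    refine lt_of_lt_of_le ?_ (Polynomial.le_degree_of_ne_zero (by rw [hψcoeff]; exact hu))
    exact_mod_cast hm₀pos
  obtain ⟨z₀, hz₀⟩ := Complex.exists_root hψdeg
  have hψ0 : ψ.eval 0 = pc (MvPolynomial.eval x f) := by
    rw [hψ, Polynomial.eval_add, Polynomial.eval_C, Polynomial.eval_finset_sum,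
      Finset.sum_eq_zero, add_zero]
    intro L hL
    rw [Polynomial.eval_mul, Polynomial.eval_pow, Polynomial.eval_X,
      zero_pow (tot_pos (hSne0 hL)).ne', mul_zero]
  have hz₀ne : z₀ ≠ 0 := by
    intro h
    rw [h] at hz₀
    exact pc_ne_zero hx (by rw [← hψ0]; exact hz₀)
  set d : Fin n → ℂ := fun j => u j * z₀ with hd
  refine ⟨fun j => x j + HahnSeries.single (b j + e) (d j), ?_, ?_⟩
  swap
  · intro j
    have : (fun j => x j + HahnSeries.single (b j + e) (d j)) j - x j
        = HahnSeries.single (b j + e) (d j) := by ring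
    rw [this]
    exact HahnSeries.orderTop_single_le
  -- main estimate
  set W0 := Vq f x with hW0
  have hVx : (MvPolynomial.eval x f).orderTop = (W0 : WithTop ℚ) := val_eq_order hx
  have hterm : ∀ L : Fin n → ℕ,
      (∏ j, (HahnSeries.single (b j + e) (d j)) ^ (L j))
        = HahnSeries.single (wtL b L + (tot L : ℚ) * e) (∏ j, (d j) ^ (L j)) := by
    intro L
    have step : (∏ j, (HahnSeries.single (b j + e) (d j)) ^ (L j))
        = ∏ j, HahnSeries.single ((L j : ℚ) * (b j + e)) ((d j) ^ (L j)) :=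
      Finset.prod_congr rfl fun j _ => KapAux.single_pow _ _ _
    rw [step, prod_single]
    have hsum : (∑ j, (L j : ℚ) * (b j + e)) = wtL b L + (tot L : ℚ) * e := by
      rw [wtL, tot]
      push_cast
      rw [Finset.sum_mul, ← Finset.sum_add_distrib]
      exact Finset.sum_congr rfl fun j _ => by ring
    rw [hsum]
  have hexp : MvPolynomial.eval (fun j => x j + HahnSeries.single (b j + e) (d j)) f
      = ∑ L ∈ box f, cc f L x *
          HahnSeries.single (wtL b L + (tot L : ℚ) * e) (∏ j, (d j) ^ (L j)) := by
    rw [cc_expand f x (fun j => HahnSeries.single (b j + e) (d j))]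
    exact Finset.sum_congr rfl fun L _ => by rw [hterm L]
  -- lower bound for each term
  have hordS : ∀ {L}, L ∈ S → (cc f L x).order = W0 - wtL b L - (tot L : ℚ) * e := by
    intro L hL
    have hpos : (0 : ℚ) < (tot L : ℚ) := by exact_mod_cast tot_pos (hSne0 hL)
    have := (Finset.mem_filter.1 hL).2
    rw [slope] at this
    field_simp at this
    linarith
  have hordge : ∀ {L}, L ∈ Scand f x →
      W0 - wtL b L - (tot L : ℚ) * e ≤ (cc f L x).order :=
    fun hL => ord_cc_ge f b hL (eps_ge f b x hL)
  have hgeL : ∀ L ∈ box f, (W0 : WithTop ℚ) ≤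
      (cc f L x * HahnSeries.single (wtL b L + (tot L : ℚ) * e)
        (∏ j, (d j) ^ (L j))).orderTop := by
    intro L hLbox
    by_cases hcc : cc f L x = 0
    · rw [hcc, zero_mul]; simp
    by_cases hL0 : L = 0
    · subst hL0
      have : wtL b (0 : Fin n → ℕ) + ((tot (0 : Fin n → ℕ) : ℚ)) * e = 0 := by
        simp [wtL, tot]
      rw [this]
      have hp : (∏ j, (d j) ^ ((0 : Fin n → ℕ) j)) = 1 := by simp
      rw [hp, KapAux.single_zero_one, mul_one, cc_zero, hVx]
    · have hLsc : L ∈ Scand f x := Finset.mem_filter.2 ⟨hLbox, hL0, hcc⟩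
      have h1 := hordge hLsc
      have : (W0 : WithTop ℚ) ≤ ((cc f L x).order + (wtL b L + (tot L : ℚ) * e) : ℚ) := by
        exact_mod_cast by linarith
      refine le_trans this (le_trans ?_ HahnSeries.orderTop_add_orderTop_le_orderTop_mul)
      push_cast
      exact add_le_add (le_of_eq (val_eq_order hcc).symm) HahnSeries.orderTop_single_le
  have hvge : (W0 : WithTop ℚ) ≤
      (MvPolynomial.eval (fun j => x j + HahnSeries.single (b j + e) (d j)) f).orderTop := by
    rw [hexp]
    exact val_sum_ge _ _ _ hgeL
  -- coefficient at W0
  have hcoL : ∀ L ∈ box f,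
      (cc f L x * HahnSeries.single (wtL b L + (tot L : ℚ) * e)
        (∏ j, (d j) ^ (L j))).coeff W0
      = if L = 0 then pc (MvPolynomial.eval x f)
        else if L ∈ S then pc (cc f L x) * ∏ j, (d j) ^ (L j) else 0 := by
    intro L hLbox
    by_cases hL0 : L = 0
    · subst hL0
      rw [if_pos rfl]
      have : wtL b (0 : Fin n → ℕ) + ((tot (0 : Fin n → ℕ) : ℚ)) * e = 0 := by
        simp [wtL, tot]
      rw [this]
      have hp : (∏ j, (d j) ^ ((0 : Fin n → ℕ) j)) = 1 := by simp
      rw [hp, KapAux.single_zero_one, mul_one, cc_zero]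
      rw [pc, hW0, Vq]
    rw [if_neg hL0]
    by_cases hcc : cc f L x = 0
    · have hLS : L ∉ S := fun h => hScc h hcc
      rw [if_neg hLS, hcc, zero_mul]
      simp
    have hLsc : L ∈ Scand f x := Finset.mem_filter.2 ⟨hLbox, hL0, hcc⟩
    by_cases hLS : L ∈ S
    · rw [if_pos hLS]
      have hord := hordS hLS
      have : W0 = (cc f L x).order + (wtL b L + (tot L : ℚ) * e) := by
        rw [hord]; ring
      rw [this, KapAux.coeff_mul_single, pc_eq]
    · rw [if_neg hLS]
      have hslt : slope f b x L < e := by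
        rcases lt_or_eq_of_le (eps_ge f b x hLsc) with h | h
        · exact h
        · exact absurd (Finset.mem_filter.2 ⟨hLsc, h⟩) hLS
      have hpos : (0 : ℚ) < (tot L : ℚ) := by exact_mod_cast tot_pos hL0
      have hstrict : W0 < (cc f L x).order + (wtL b L + (tot L : ℚ) * e) := by
        rw [slope, div_lt_iff₀ hpos] at hslt
        nlinarith
      have hstrict' : (W0 : WithTop ℚ) <
          (((cc f L x).order + (wtL b L + (tot L : ℚ) * e) : ℚ) : WithTop ℚ) := by
        exact_mod_cast hstrict
      refine HahnSeries.coeff_eq_zero_of_lt_orderTop (lt_of_lt_of_le hstrict' ?_)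
      refine le_trans ?_ HahnSeries.orderTop_add_orderTop_le_orderTop_mul
      push_cast
      exact add_le_add (le_of_eq (val_eq_order hcc).symm) HahnSeries.orderTop_single_le
  have hco : (MvPolynomial.eval (fun j => x j + HahnSeries.single (b j + e) (d j)) f).coeff W0
      = 0 := by
    rw [hexp, KapAux.coeff_sum]
    rw [Finset.sum_congr rfl hcoL]
    rw [Finset.sum_ite, Finset.sum_ite]
    have h1 : (box f).filter (fun L => L = 0) = {0} := by
      apply Finset.eq_singleton_iff_unique_mem.2
      constructor
      · exact Finset.mem_filter.2 ⟨zero_mem_box f, rfl⟩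
      · intro L hL; exact (Finset.mem_filter.1 hL).2
    have h2 : ((box f).filter (fun L => ¬L = 0)).filter (fun L => L ∈ S) = S := by
      apply Finset.ext
      intro L
      simp only [Finset.mem_filter]
      constructor
      · rintro ⟨_, h⟩; exact h
      · intro h
        exact ⟨⟨(Finset.mem_filter.1 (hSsub h)).1, hSne0 h⟩, h⟩
    rw [h1, h2, Finset.sum_singleton, Finset.sum_const, smul_zero, add_zero]
    -- now: pc (eval x f) + Σ_{L ∈ S} pc (cc f L x) * Π d^L = ψ.eval z₀ = 0
    have hψz : ψ.eval z₀ = pc (MvPolynomial.eval x f) +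
        ∑ L ∈ S, pc (cc f L x) * ∏ j, (d j) ^ (L j) := by
      rw [hψ, Polynomial.eval_add, Polynomial.eval_C, Polynomial.eval_finset_sum]
      congr 1
      refine Finset.sum_congr rfl fun L hL => ?_
      rw [Polynomial.eval_mul, Polynomial.eval_pow, Polynomial.eval_X, Polynomial.eval_C]
      rw [hd]
      simp only
      rw [show (∏ j, (u j * z₀) ^ (L j)) = (∏ j, (u j) ^ (L j)) * z₀ ^ (tot L) by
        rw [tot, ← Finset.prod_pow_eq_pow_sum, ← Finset.prod_mul_distrib]
        exact Finset.prod_congr rfl fun j _ => mul_pow _ _ _]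
      ring
    rw [← hψz]
    exact hz₀
  rw [hVx]
  exact lt_val_of_coeff_zero hvge hco


lemma wtL_add (L M : Fin n → ℕ) :
    wtL b (fun j => L j + M j) = wtL b L + wtL b M := by
  rw [wtL, wtL, wtL, ← Finset.sum_add_distrib]
  refine Finset.sum_congr rfl fun j _ => ?_
  push_cast
  ring

lemma tot_add (L M : Fin n → ℕ) : tot (fun j => L j + M j) = tot L + tot M := by
  rw [tot, tot, tot, ← Finset.sum_add_distrib]

lemma sum_be (M : Fin n → ℕ) (e : ℚ) :
    (∑ j, (M j : ℚ) * (b j + e)) = wtL b M + (tot M : ℚ) * e := by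
  rw [wtL, tot]
  push_cast
  rw [Finset.sum_mul, ← Finset.sum_add_distrib]
  exact Finset.sum_congr rfl fun j _ => by ring

/-- Comparison ("Lemma A"): the critical exponent cannot drop when passing to a closer,
better point. -/
lemma compare (x y : Fin n → K) (hx : MvPolynomial.eval x f ≠ 0)
    (hScx : (Scand f x).Nonempty) (e : ℚ) (hex : e ≤ eps f b x)
    (hV : Vq f x ≤ Vq f y)
    (hd : ∀ j, ((b j + e : ℚ) : WithTop ℚ) ≤ (y j - x j).orderTop) :
    e ≤ eps f b y := by
  by_contra hlt
  push_neg at hlt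
  obtain ⟨L1, hL1, hsl1⟩ := eps_attained f b x hScx
  have hL1ne : L1 ≠ 0 := (Finset.mem_filter.1 hL1).2.1
  have hcc1 : cc f L1 x ≠ 0 := (Finset.mem_filter.1 hL1).2.2
  have hpos1 : (0 : ℚ) < (tot L1 : ℚ) := by exact_mod_cast tot_pos hL1ne
  have hord1 : (cc f L1 x).order = Vq f x - wtL b L1 - (tot L1 : ℚ) * eps f b x := by
    rw [slope] at hsl1
    field_simp at hsl1
    linarith
  set r := (cc f L1 x).order with hr
  have hrle : r ≤ Vq f x - wtL b L1 - (tot L1 : ℚ) * e := by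
    rw [hord1]
    nlinarith
  have hshift := cc_shift f L1 y x
  have hterm0 : ∀ M ∈ box f,
      (HahnSeries.C (chi2 L1 M) * cc f (fun j => L1 j + M j) y *
        ∏ j, (x j - y j) ^ (M j)).coeff r = 0 := by
    intro M hM
    by_cases hcz : cc f (fun j => L1 j + M j) y = 0
    · rw [hcz]
      simp
    have hL'0 : (fun j => L1 j + M j) ≠ 0 := by
      intro h
      apply hL1ne
      funext j
      have := congrFun h j
      simp only [Pi.zero_apply] at this ⊢
      omega
    have hL'sc : (fun j => L1 j + M j) ∈ Scand f y :=
      Finset.mem_filter.2 ⟨box_of_cc_ne hcz, hL'0, hcz⟩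
    have hposM : (0 : ℚ) < (tot (fun j => L1 j + M j) : ℚ) := by
      exact_mod_cast tot_pos hL'0
    have hord' : Vq f y - wtL b (fun j => L1 j + M j)
        - (tot (fun j => L1 j + M j) : ℚ) * eps f b y
          ≤ (cc f (fun j => L1 j + M j) y).order :=
      ord_cc_ge f b hL'sc (eps_ge f b y hL'sc)
    have hstrict : r < (cc f (fun j => L1 j + M j) y).order
        + (wtL b M + (tot M : ℚ) * e) := by
      have h1 : wtL b (fun j => L1 j + M j) = wtL b L1 + wtL b M := wtL_add b L1 M
      have h2 : ((tot (fun j => L1 j + M j) : ℕ) : ℚ) = (tot L1 : ℚ) + (tot M : ℚ) := by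
        rw [tot_add]
        push_cast
        ring
      rw [h1, h2] at hord'
      nlinarith
    have hvend : (((cc f (fun j => L1 j + M j) y).order
        + (wtL b M + (tot M : ℚ) * e) : ℚ) : WithTop ℚ) ≤
        (HahnSeries.C (chi2 L1 M) * cc f (fun j => L1 j + M j) y *
          ∏ j, (x j - y j) ^ (M j)).orderTop := by
      have hprod : ((∑ j, (M j : ℚ) * (b j + e) : ℚ) : WithTop ℚ)
          ≤ (∏ j, (x j - y j) ^ (M j)).orderTop := by
        refine val_prod_ge Finset.univ _ _ fun j _ => ?_
        refine val_pow_ge ?_ (M j)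
        have : x j - y j = -(y j - x j) := by ring
        rw [this, HahnSeries.orderTop_neg]
        exact hd j
      have hC : ((0 : ℚ) : WithTop ℚ) ≤ (HahnSeries.C (chi2 L1 M) : K).orderTop := by
        exact_mod_cast val_C (chi2 L1 M)
      have hcc' : (((cc f (fun j => L1 j + M j) y).order : ℚ) : WithTop ℚ)
          ≤ (cc f (fun j => L1 j + M j) y).orderTop :=
        le_of_eq (val_eq_order hcz).symm
      have := val_mul_ge (val_mul_ge hC hcc') hprod
      rw [sum_be b M e] at this
      convert this using 2
      ring
    have : (r : WithTop ℚ) < (HahnSeries.C (chi2 L1 M) * cc f (fun j => L1 j + M j) y *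
        ∏ j, (x j - y j) ^ (M j)).orderTop :=
      lt_of_lt_of_le (by exact_mod_cast hstrict) hvend
    exact HahnSeries.coeff_eq_zero_of_lt_orderTop this
  have hzero : (cc f L1 x).coeff r = 0 := by
    rw [hshift, KapAux.coeff_sum]
    exact Finset.sum_eq_zero hterm0
  exact HahnSeries.coeff_order_ne_zero hcc1 hzero

/-- The partial-order relation used for Zorn's lemma. -/
def Rel (x y : Fin n → K) : Prop :=
  x = y ∨ ((MvPolynomial.eval x f).orderTop < (MvPolynomial.eval y f).orderTop ∧
    ∀ j, ((b j + eps f b x : ℚ) : WithTop ℚ) ≤ (y j - x j).orderTop)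

lemma Rel_refl (x : Fin n → K) : Rel f b x x := Or.inl rfl

lemma eval_ne_zero_of_rel {x y : Fin n → K}
    (h : (MvPolynomial.eval x f).orderTop < (MvPolynomial.eval y f).orderTop) :
    MvPolynomial.eval x f ≠ 0 := by
  intro hz
  rw [hz] at h
  simp only [HahnSeries.orderTop_zero] at h
  exact not_top_lt h

lemma Vq_le_of_orderTop_le {x y : Fin n → K} (hx : MvPolynomial.eval x f ≠ 0)
    (hy : MvPolynomial.eval y f ≠ 0)
    (h : (MvPolynomial.eval x f).orderTop ≤ (MvPolynomial.eval y f).orderTop) :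
    Vq f x ≤ Vq f y := by
  rw [val_eq_order hx, val_eq_order hy] at h
  exact_mod_cast h

lemma Rel_trans (hS : ∀ x : Fin n → K, (Scand f x).Nonempty) {x y z : Fin n → K}
    (hxy : Rel f b x y) (hyz : Rel f b y z) : Rel f b x z := by
  rcases hxy with rfl | ⟨hV1, hd1⟩
  · exact hyz
  rcases hyz with rfl | ⟨hV2, hd2⟩
  · exact Or.inr ⟨hV1, hd1⟩
  refine Or.inr ⟨lt_trans hV1 hV2, fun j => ?_⟩
  have hx : MvPolynomial.eval x f ≠ 0 := eval_ne_zero_of_rel f hV1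
  have hy : MvPolynomial.eval y f ≠ 0 := eval_ne_zero_of_rel f hV2
  have heps : eps f b x ≤ eps f b y :=
    compare f b x y hx (hS x) (eps f b x) le_rfl
      (Vq_le_of_orderTop_le f hx hy (le_of_lt hV1)) hd1
  have : z j - x j = (z j - y j) + (y j - x j) := by ring
  rw [this]
  refine le_trans ?_ HahnSeries.min_orderTop_le_orderTop_add
  refine le_min (le_trans ?_ (hd2 j)) (hd1 j)
  exact_mod_cast by linarith


lemma chain_bound (hS : ∀ x : Fin n → K, (Scand f x).Nonempty) (x₁ : Fin n → K)
    (C : Set {y : Fin n → K // Rel f b x₁ y})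
    (hC : IsChain (fun p q => Rel f b p.1 q.1) C) :
    ∃ ub : {y : Fin n → K // Rel f b x₁ y}, ∀ a ∈ C, Rel f b a.1 ub.1 := by
  classical
  by_cases hCe : C.Nonempty
  swap
  · exact ⟨⟨x₁, Rel_refl f b x₁⟩, fun a ha => absurd ⟨a, ha⟩ hCe⟩
  by_cases hmaxel : ∃ m ∈ C, ∀ a ∈ C, Rel f b a.1 m.1
  · obtain ⟨m, _, hm⟩ := hmaxel
    exact ⟨m, hm⟩
  push_neg at hmaxel
  have hsucc : ∀ m ∈ C, ∃ a ∈ C,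
      (MvPolynomial.eval m.1 f).orderTop < (MvPolynomial.eval a.1 f).orderTop ∧
      ∀ j, ((b j + eps f b m.1 : ℚ) : WithTop ℚ) ≤ (a.1 j - m.1 j).orderTop := by
    intro m hm
    obtain ⟨a, haC, hna⟩ := hmaxel m hm
    have hne : a ≠ m := by
      intro h
      exact hna (h ▸ Rel_refl f b m.1)
    rcases hC haC hm hne with h | h
    · exact absurd h hna
    · rcases h with heq | hstr
      · exact absurd (Subtype.ext heq) hne.symm
      · exact ⟨a, haC, hstr.1, hstr.2⟩
  have hnz : ∀ m ∈ C, MvPolynomial.eval m.1 f ≠ 0 := by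
    intro m hm
    obtain ⟨a, _, h1, _⟩ := hsucc m hm
    exact eval_ne_zero_of_rel f h1
  -- spherical completeness per coordinate
  have hujs : ∀ j : Fin n, ∃ uj : K, ∀ p : C, ∀ q < b j + eps f b (p.1.1),
      uj.coeff q = ((p.1.1) j).coeff q := by
    intro j
    refine spherical (ι := C) (fun p => (p.1.1) j) (fun p => b j + eps f b (p.1.1)) ?_
    intro p p' q hq hq'
    rcases eq_or_ne p p' with rfl | hne
    · rfl
    have hne1 : p.1 ≠ p'.1 := fun h => hne (Subtype.ext h)
    have key : ∀ (r s : {y : Fin n → K // Rel f b x₁ y}), r ∈ C → s ∈ C →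
        Rel f b r.1 s.1 → q < b j + eps f b r.1 → (r.1 j).coeff q = (s.1 j).coeff q := by
      intro r s _ _ hrel hqr
      rcases hrel with heq | ⟨_, hd⟩
      · rw [heq]
      · have := le_val_iff.1 (hd j) q hqr
        rw [HahnSeries.coeff_sub] at this
        have := sub_eq_zero.1 this
        exact this.symm
    rcases hC p.2 p'.2 hne1 with h | h
    · exact key p.1 p'.1 p.2 p'.2 h hq
    · exact (key p'.1 p.1 p'.2 p.2 h hq').symm
  choose u hu using hujs
  have hub : ∀ p : C, ∀ j,
      ((b j + eps f b p.1.1 : ℚ) : WithTop ℚ) ≤ ((u j) - (p.1.1 j)).orderTop := by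
    intro p j
    rw [le_val_iff]
    intro q hq
    rw [HahnSeries.coeff_sub, hu j p q hq, sub_self]
  have hVu : ∀ p : C, (MvPolynomial.eval p.1.1 f).orderTop
      ≤ (MvPolynomial.eval u f).orderTop := by
    intro p
    have hexp := cc_expand f p.1.1 (fun j => u j - p.1.1 j)
    have heq : (fun j => p.1.1 j + (u j - p.1.1 j)) = u := funext fun j => by ring
    rw [heq] at hexp
    rw [hexp, val_eq_order (hnz p.1 p.2)]
    refine val_sum_ge _ _ _ ?_
    intro L hLbox
    by_cases hcz : cc f L p.1.1 = 0
    · rw [hcz, zero_mul]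
      simp
    by_cases hL0 : L = 0
    · subst hL0
      have hp : (∏ j, (u j - p.1.1 j) ^ ((0 : Fin n → ℕ) j)) = 1 := by simp
      rw [hp, cc_zero, mul_one, val_eq_order (hnz p.1 p.2)]
    have hLsc : L ∈ Scand f p.1.1 := Finset.mem_filter.2 ⟨hLbox, hL0, hcz⟩
    have h1 : Vq f p.1.1 - wtL b L - (tot L : ℚ) * eps f b p.1.1 ≤ (cc f L p.1.1).order :=
      ord_cc_ge f b hLsc (eps_ge f b _ hLsc)
    have hprod : ((∑ j, (L j : ℚ) * (b j + eps f b p.1.1) : ℚ) : WithTop ℚ)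
        ≤ (∏ j, (u j - p.1.1 j) ^ (L j)).orderTop :=
      val_prod_ge Finset.univ _ _ fun j _ => val_pow_ge (hub p j) (L j)
    have hcc' : (((cc f L p.1.1).order : ℚ) : WithTop ℚ) ≤ (cc f L p.1.1).orderTop :=
      le_of_eq (val_eq_order hcz).symm
    have hchain := val_mul_ge hcc' hprod
    rw [sum_be b L (eps f b p.1.1)] at hchain
    refine le_trans ?_ hchain
    have : Vq f p.1.1 ≤ (cc f L p.1.1).order + (wtL b L + (tot L : ℚ) * eps f b p.1.1) := by
      linarith
    exact_mod_cast this
  have hRxu : ∀ p : C, Rel f b p.1.1 u := by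
    intro p
    obtain ⟨a, haC, hV1, _⟩ := hsucc p.1 p.2
    exact Or.inr ⟨lt_of_lt_of_le hV1 (hVu ⟨a, haC⟩), fun j => hub p j⟩
  obtain ⟨p₀, hp₀⟩ := hCe
  have hx₁u : Rel f b x₁ u :=
    Rel_trans f b hS p₀.2 (hRxu ⟨p₀, hp₀⟩)
  exact ⟨⟨u, hx₁u⟩, fun a ha => hRxu ⟨a, ha⟩⟩

/-- The Zorn/Newton construction: a root of `f` in the ball around `x₁`. -/
lemma exists_root (hS : ∀ x : Fin n → K, (Scand f x).Nonempty) (x₁ : Fin n → K) :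
    ∃ y : Fin n → K, Rel f b x₁ y ∧ MvPolynomial.eval y f = 0 := by
  obtain ⟨m, hm⟩ := exists_maximal_of_chains_bounded
    (r := fun p q : {y : Fin n → K // Rel f b x₁ y} => Rel f b p.1 q.1)
    (fun C hC => chain_bound f b hS x₁ C hC)
    (fun {a b' c} h1 h2 => Rel_trans f b hS h1 h2)
  refine ⟨m.1, m.2, ?_⟩
  by_contra hroot
  obtain ⟨y, hy1, hy2⟩ := improve f b hS m.1 hroot
  have hrel : Rel f b m.1 y := Or.inr ⟨hy1, hy2⟩
  have hym : Rel f b x₁ y := Rel_trans f b hS m.2 hrel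
  have := hm ⟨y, hym⟩ hrel
  rcases this with heq | hstr
  · have heq' : y = m.1 := heq
    rw [heq'] at hy1
    exact lt_irrefl _ hy1
  · exact lt_asymm hy1 hstr.1

end Kap


section Main

open KapAux

theorem extended_kapranov_forward (n : ℕ) (f : MvPolynomial (Fin n) K) (hf : f ≠ 0)
    (γ : Fin n → ℂ) (hγ : ∀ j, γ j ≠ 0) (b : Fin n → ℚ)
    (x : Fin n → K) (hx0 : ∀ j, x j ≠ 0) (hxf : MvPolynomial.eval x f = 0)
    (hxo : ∀ j, (x j).order = b j) (hxp : ∀ j, pc (x j) = γ j) :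
    b ∈ tropSet f ∧ MvPolynomial.eval γ (initForm f b) = 0 := by
  classical
  have hS : f.support.Nonempty := MvPolynomial.support_nonempty.2 hf
  obtain ⟨i₀, hi₀, hmin⟩ := Finset.exists_mem_eq_inf f.support hS
    (fun i => (wt f b i : WithTop ℚ))
  set m : ℚ := wt f b i₀ with hm
  have htrop : trop f b = (m : WithTop ℚ) := hmin
  have hprodne : ∀ i : Fin n →₀ ℕ, (∏ j, x j ^ i j) ≠ 0 := fun i =>
    Finset.prod_ne_zero_iff.2 fun j _ => pow_ne_zero _ (hx0 j)
  have hTord : ∀ i ∈ f.support,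
      (f.coeff i * ∏ j, x j ^ i j).order = wt f b i := by
    intro i hi
    have hc : f.coeff i ≠ 0 := MvPolynomial.mem_support_iff.1 hi
    rw [HahnSeries.order_mul hc (hprodne i),
      order_prod _ _ (fun j _ => pow_ne_zero _ (hx0 j))]
    simp only [HahnSeries.order_pow, hxo, smul_eq_mul, nsmul_eq_mul]
    rfl
  have hTlc : ∀ i ∈ f.support,
      (f.coeff i * ∏ j, x j ^ i j).leadingCoeff
        = pc (f.coeff i) * ∏ j, γ j ^ i j := by
    intro i hi
    have hc : f.coeff i ≠ 0 := MvPolynomial.mem_support_iff.1 hi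
    rw [lc_mul hc (hprodne i), lc_prod _ _ (fun j _ => pow_ne_zero _ (hx0 j)),
      ← pc_eq]
    congr 1
    refine Finset.prod_congr rfl fun j _ => ?_
    rw [lc_pow _ (hx0 j), ← pc_eq, hxp j]
  have hle : ∀ i ∈ f.support, m ≤ wt f b i := by
    intro i hi
    have : trop f b ≤ (wt f b i : WithTop ℚ) := Finset.inf_le hi
    rw [htrop] at this
    exact_mod_cast this
  have hsum : ∑ i ∈ f.support, (f.coeff i * ∏ j, x j ^ i j).coeff m = 0 := by
    have := congrArg (fun z : K => z.coeff m) hxf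
    rw [MvPolynomial.eval_eq' x f] at this
    simpa using
      ((map_sum (HahnSeries.coeff.addMonoidHom (R := ℂ) m)
        (fun i => f.coeff i * ∏ j, x j ^ i j) f.support).symm.trans this)
  have hterm : ∀ i ∈ f.support,
      (f.coeff i * ∏ j, x j ^ i j).coeff m
        = if wt f b i = m then pc (f.coeff i) * ∏ j, γ j ^ i j else 0 := by
    intro i hi
    by_cases h : wt f b i = m
    · rw [if_pos h, ← hTlc i hi, HahnSeries.leadingCoeff_eq, hTord i hi, h]
    · rw [if_neg h]
      exact HahnSeries.coeff_eq_zero_of_lt_order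
        (by rw [hTord i hi]; exact lt_of_le_of_ne (hle i hi) (Ne.symm h))
  have hsum2 : ∑ i ∈ f.support.filter (fun i => wt f b i = m),
      pc (f.coeff i) * ∏ j, γ j ^ i j = 0 := by
    rw [← hsum, Finset.sum_filter]
    exact (Finset.sum_congr rfl hterm).symm
  have hfilter : (f.support.filter fun i => (wt f b i : WithTop ℚ) = trop f b)
      = f.support.filter fun i => wt f b i = m := by
    refine Finset.filter_congr fun i _ => ?_
    rw [htrop]
    exact ⟨fun h => by exact_mod_cast h, fun h => by exact_mod_cast h⟩
  have hi₀f : i₀ ∈ f.support.filter fun i => wt f b i = m :=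
    Finset.mem_filter.2 ⟨hi₀, rfl⟩
  have hival : MvPolynomial.eval γ (initForm f b)
      = ∑ i ∈ f.support.filter (fun i => wt f b i = m),
          pc (f.coeff i) * ∏ j, γ j ^ i j := by
    rw [initForm, hfilter, map_sum]
    refine Finset.sum_congr rfl fun i _ => ?_
    rw [MvPolynomial.eval_monomial]
    congr 1
    rw [Finsupp.prod_pow]
  have hival0 : MvPolynomial.eval γ (initForm f b) = 0 := by rw [hival, hsum2]
  refine ⟨?_, hival0⟩
  have hne : pc (f.coeff i₀) * ∏ j, γ j ^ i₀ j ≠ 0 :=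
    mul_ne_zero (pc_ne_zero (MvPolynomial.mem_support_iff.1 hi₀))
      (Finset.prod_ne_zero_iff.2 fun j _ => pow_ne_zero _ (hγ j))
  by_cases hsub : ∀ i ∈ f.support.filter (fun i => wt f b i = m), i = i₀
  · exfalso
    have : (f.support.filter fun i => wt f b i = m) = {i₀} :=
      Finset.eq_singleton_iff_unique_mem.2 ⟨hi₀f, hsub⟩
    rw [this, Finset.sum_singleton] at hsum2
    exact hne hsum2
  · push_neg at hsub
    obtain ⟨i₁, hi₁, hne₁⟩ := hsub
    have hi₁s := Finset.mem_filter.1 hi₁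
    refine ⟨i₀, hi₀, i₁, hi₁s.1, fun h => hne₁ h.symm, htrop.symm ▸ rfl, ?_⟩
    rw [htrop, hi₁s.2]

theorem extended_kapranov_backward (n : ℕ) (f : MvPolynomial (Fin n) K)
    (γ : Fin n → ℂ) (hγ : ∀ j, γ j ≠ 0) (b : Fin n → ℚ)
    (hb : b ∈ tropSet f) (h0 : MvPolynomial.eval γ (initForm f b) = 0) :
    ∃ x : Fin n → K, (∀ j, x j ≠ 0) ∧ MvPolynomial.eval x f = 0 ∧
        (∀ j, (x j).order = b j) ∧ ∀ j, pc (x j) = γ j := by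
  classical
  obtain ⟨i0, hi0, i1, hi1, hne01, htrop0, htrop1⟩ := hb
  set W := wt f b i0 with hW
  have htropW : trop f b = (W : WithTop ℚ) := htrop0.symm
  set A := f.support.filter (fun i => (wt f b i : WithTop ℚ) = trop f b) with hA
  have hmemA : ∀ {i : Fin n →₀ ℕ}, i ∈ A ↔ (i ∈ f.support ∧ wt f b i = W) := by
    intro i
    rw [hA, Finset.mem_filter, htropW]
    exact and_congr_right fun _ =>
      ⟨fun h => by exact_mod_cast h, fun h => by exact_mod_cast h⟩
  have hi0A : i0 ∈ A := hmemA.2 ⟨hi0, by exact_mod_cast htrop0.trans htropW⟩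
  have hi1A : i1 ∈ A := hmemA.2 ⟨hi1, by exact_mod_cast htrop1.trans htropW⟩
  have hle : ∀ i ∈ f.support, W ≤ wt f b i := by
    intro i hi
    have : trop f b ≤ (wt f b i : WithTop ℚ) := Finset.inf_le hi
    rw [htropW] at this
    exact_mod_cast this
  have hsum0 : ∑ i ∈ A, pc (f.coeff i) * ∏ j, γ j ^ (i j) = 0 := by
    rw [← h0, initForm, map_sum, ← hA]
    refine (Finset.sum_congr rfl fun i _ => ?_).symm
    rw [MvPolynomial.eval_monomial]
    congr 1
    rw [Finsupp.prod_pow]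
  have hexA : ∃ ia ∈ A, (ia : Fin n →₀ ℕ) ≠ 0 := by
    by_cases h : i0 = 0
    · exact ⟨i1, hi1A, fun h1 => hne01 (by rw [h, h1])⟩
    · exact ⟨i0, hi0A, h⟩
  obtain ⟨ia, hiaA, hia0⟩ := hexA
  have hS : ∀ x : Fin n → K, (Kap.Scand f x).Nonempty := by
    obtain ⟨Kc, hKc1, hKc2, hKc3⟩ :=
      Kap.exists_const_cc f ⟨ia, (hmemA.1 hiaA).1, hia0⟩
    intro x
    refine ⟨(Kc : Fin n → ℕ), Finset.mem_filter.2 ⟨Kap.supp_mem_box hKc1, hKc2, ?_⟩⟩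
    rw [hKc3 x]
    exact MvPolynomial.mem_support_iff.1 hKc1
  set x₁ : Fin n → K := fun j => HahnSeries.single (b j) (γ j) with hx₁
  by_cases h₁ : MvPolynomial.eval x₁ f = 0
  · exact ⟨x₁, fun j => HahnSeries.single_ne_zero (hγ j), h₁,
      fun j => HahnSeries.order_single (hγ j), fun j => KapAux.pc_single _ _⟩
  -- expansion of the value at the initial point
  have hx₁exp : MvPolynomial.eval x₁ f = ∑ i ∈ f.support,
      MvPolynomial.coeff i f *
        HahnSeries.single (∑ j, (i j : ℚ) * b j) (∏ j, γ j ^ (i j)) := by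
    rw [MvPolynomial.eval_eq']
    refine Finset.sum_congr rfl fun i _ => ?_
    congr 1
    have step : (∏ j, (x₁ j) ^ (i j))
        = ∏ j, HahnSeries.single ((i j : ℚ) * b j) (γ j ^ (i j)) :=
      Finset.prod_congr rfl fun j _ => by rw [hx₁]; exact KapAux.single_pow _ _ _
    rw [step, prod_single]
  have hvalterm : ∀ i ∈ f.support, ((W : ℚ) : WithTop ℚ) ≤
      (MvPolynomial.coeff i f *
        HahnSeries.single (∑ j, (i j : ℚ) * b j) (∏ j, γ j ^ (i j))).orderTop := by
    intro i hi
    have hc : f.coeff i ≠ 0 := MvPolynomial.mem_support_iff.1 hi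
    have h2 := val_mul_ge (le_of_eq (val_eq_order hc).symm)
      (HahnSeries.orderTop_single_le (a := ∑ j, (i j : ℚ) * b j) (r := ∏ j, γ j ^ (i j)))
    refine le_trans ?_ h2
    have : W ≤ (f.coeff i).order + ∑ j, (i j : ℚ) * b j := hle i hi
    exact_mod_cast this
  have hVgt : ((W : ℚ) : WithTop ℚ) < (MvPolynomial.eval x₁ f).orderTop := by
    have hvge : ((W : ℚ) : WithTop ℚ) ≤ (MvPolynomial.eval x₁ f).orderTop := by
      rw [hx₁exp]
      exact val_sum_ge _ _ _ hvalterm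
    have hco : (MvPolynomial.eval x₁ f).coeff W = 0 := by
      rw [hx₁exp, KapAux.coeff_sum]
      have hterm : ∀ i ∈ f.support,
          (MvPolynomial.coeff i f *
            HahnSeries.single (∑ j, (i j : ℚ) * b j) (∏ j, γ j ^ (i j))).coeff W
          = if wt f b i = W then pc (f.coeff i) * ∏ j, γ j ^ (i j) else 0 := by
        intro i hi
        have hc : f.coeff i ≠ 0 := MvPolynomial.mem_support_iff.1 hi
        by_cases h : wt f b i = W
        · rw [if_pos h]
          have : W = (f.coeff i).order + ∑ j, (i j : ℚ) * b j := by
            rw [← h]; rfl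
          rw [this, KapAux.coeff_mul_single]
        · rw [if_neg h]
          have hstrict : W < wt f b i := lt_of_le_of_ne (hle i hi) (Ne.symm h)
          rw [wt] at hstrict
          have hstrict' : ((W : ℚ) : WithTop ℚ) <
              (((f.coeff i).order + ∑ j, (i j : ℚ) * b j : ℚ) : WithTop ℚ) := by
            exact_mod_cast hstrict
          refine HahnSeries.coeff_eq_zero_of_lt_orderTop ?_
          refine lt_of_lt_of_le hstrict' ?_
          exact val_mul_ge (le_of_eq (val_eq_order hc).symm)
            HahnSeries.orderTop_single_le
      rw [Finset.sum_congr rfl hterm, ← Finset.sum_filter]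
      rw [← hsum0]
      congr 1
      rw [hA]
      refine Finset.filter_congr fun i _ => ?_
      rw [htropW]
      exact ⟨fun h => by exact_mod_cast h, fun h => by exact_mod_cast h⟩
    exact lt_val_of_coeff_zero hvge hco
  have hVqgt : W < Kap.Vq f x₁ := by
    have := hVgt
    rw [val_eq_order h₁] at this
    exact_mod_cast this
  -- the special index Kp ∈ A
  set T := A.filter (fun i => ia ≤ i) with hT
  obtain ⟨Kp, hKpT, hKpmax⟩ : ∃ m ∈ T, ∀ x ∈ T, ¬ m < x := by
    obtain ⟨m, hm⟩ := Finset.exists_maximal (s := T)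
      ⟨ia, Finset.mem_filter.2 ⟨hiaA, le_refl _⟩⟩
    exact ⟨m, hm.1, fun x hx hlt => hlt.not_ge (hm.2 hx hlt.le)⟩
  have hKpA : Kp ∈ A := (Finset.mem_filter.1 hKpT).1
  have hKpge : ia ≤ Kp := (Finset.mem_filter.1 hKpT).2
  have hKpsupp : Kp ∈ f.support := (hmemA.1 hKpA).1
  have hKpwt : wt f b Kp = W := (hmemA.1 hKpA).2
  have hKpc : f.coeff Kp ≠ 0 := MvPolynomial.mem_support_iff.1 hKpsupp
  have hKp0 : (Kp : Fin n → ℕ) ≠ 0 := by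
    intro h
    apply hia0
    ext j
    have h1 := congrFun h j
    have h2 : ia j ≤ Kp j := hKpge j
    simp only [Pi.zero_apply] at h1
    simp only [Finsupp.coe_zero, Pi.zero_apply]
    omega
  set t₀ : ℚ := W - Kap.wtL b (Kp : Fin n → ℕ) with ht₀
  have hwtLKp : Kap.wtL b (Kp : Fin n → ℕ) = ∑ j, (Kp j : ℚ) * b j := rfl
  have hordKp : (f.coeff Kp).order = t₀ := by
    rw [ht₀, hwtLKp, ← hKpwt, wt]
    ring
  -- the Taylor coefficient cc f Kp x₁
  have hccexp : Kap.cc f (Kp : Fin n → ℕ) x₁ = ∑ i ∈ f.support,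
      HahnSeries.C (Kap.chi i (Kp : Fin n → ℕ)) * MvPolynomial.coeff i f *
        HahnSeries.single (∑ j, ((i j - Kp j : ℕ) : ℚ) * b j)
          (∏ j, γ j ^ (i j - Kp j)) := by
    rw [Kap.cc]
    refine Finset.sum_congr rfl fun i _ => ?_
    congr 1
    have step : (∏ j, (x₁ j) ^ (i j - Kp j))
        = ∏ j, HahnSeries.single (((i j - Kp j : ℕ) : ℚ) * b j) (γ j ^ (i j - Kp j)) :=
      Finset.prod_congr rfl fun j _ => by rw [hx₁]; exact KapAux.single_pow _ _ _
    rw [step, prod_single]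
  have hsubsum : ∀ {i : Fin n →₀ ℕ}, (∀ j, Kp j ≤ i j) →
      (∑ j, ((i j - Kp j : ℕ) : ℚ) * b j)
        = (∑ j, (i j : ℚ) * b j) - Kap.wtL b (Kp : Fin n → ℕ) := by
    intro i hge
    rw [hwtLKp, ← Finset.sum_sub_distrib]
    refine Finset.sum_congr rfl fun j _ => ?_
    rw [Nat.cast_sub (hge j)]
    ring
  have hccval : ∀ i ∈ f.support, ((t₀ : ℚ) : WithTop ℚ) ≤
      (HahnSeries.C (Kap.chi i (Kp : Fin n → ℕ)) * MvPolynomial.coeff i f *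
        HahnSeries.single (∑ j, ((i j - Kp j : ℕ) : ℚ) * b j)
          (∏ j, γ j ^ (i j - Kp j))).orderTop := by
    intro i hi
    by_cases hge : ∀ j, Kp j ≤ i j
    · have hc : f.coeff i ≠ 0 := MvPolynomial.mem_support_iff.1 hi
      have h2 := val_mul_ge (val_mul_ge (val_C (Kap.chi i (Kp : Fin n → ℕ)))
          (le_of_eq (val_eq_order hc).symm))
        (HahnSeries.orderTop_single_le (a := ∑ j, ((i j - Kp j : ℕ) : ℚ) * b j)
          (r := ∏ j, γ j ^ (i j - Kp j)))
      refine le_trans ?_ h2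
      rw [hsubsum hge]
      have hwt := hle i hi
      rw [wt] at hwt
      have : t₀ ≤ 0 + (f.coeff i).order
          + ((∑ j, (i j : ℚ) * b j) - Kap.wtL b (Kp : Fin n → ℕ)) := by
        rw [ht₀]
        linarith
      exact_mod_cast this
    · push_neg at hge
      obtain ⟨j, hj⟩ := hge
      rw [Kap.chi_eq_zero ⟨j, hj⟩]
      simp
  have hcccoeff : ∀ i ∈ f.support,
      (HahnSeries.C (Kap.chi i (Kp : Fin n → ℕ)) * MvPolynomial.coeff i f *
        HahnSeries.single (∑ j, ((i j - Kp j : ℕ) : ℚ) * b j)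
          (∏ j, γ j ^ (i j - Kp j))).coeff t₀
      = if i = Kp then pc (f.coeff Kp) else 0 := by
    intro i hi
    by_cases heq : i = Kp
    · subst heq
      rw [if_pos rfl, Kap.chi_self, map_one, one_mul]
      have hz : (∑ j, ((i j - i j : ℕ) : ℚ) * b j) = 0 := by simp
      have hone : (∏ j, γ j ^ (i j - i j)) = 1 := by simp
      rw [hz, hone, KapAux.single_zero_one, mul_one, ← hordKp]
      rfl
    rw [if_neg heq]
    by_cases hge : ∀ j, Kp j ≤ i j
    · have hc : f.coeff i ≠ 0 := MvPolynomial.mem_support_iff.1 hi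
      have hiA : i ∉ A := by
        intro hiA
        have hiT : i ∈ T := Finset.mem_filter.2
          ⟨hiA, le_trans hKpge (fun j => hge j)⟩
        exact hKpmax i hiT (lt_of_le_of_ne (fun j => hge j) (fun h => heq h.symm))
      have hwtgt : W < wt f b i :=
        lt_of_le_of_ne (hle i hi) (fun h => hiA (hmemA.2 ⟨hi, h.symm⟩))
      have hstrict : t₀ < 0 + (f.coeff i).order
          + ((∑ j, (i j : ℚ) * b j) - Kap.wtL b (Kp : Fin n → ℕ)) := by
        rw [wt] at hwtgt
        rw [ht₀]
        linarith
      refine HahnSeries.coeff_eq_zero_of_lt_orderTop ?_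
      rw [← hsubsum hge] at hstrict
      have hstrict' : ((t₀ : ℚ) : WithTop ℚ) <
          ((0 + (f.coeff i).order
            + (∑ j, ((i j - Kp j : ℕ) : ℚ) * b j) : ℚ) : WithTop ℚ) := by
        exact_mod_cast hstrict
      refine lt_of_lt_of_le hstrict' ?_
      exact val_mul_ge (val_mul_ge (val_C (Kap.chi i (Kp : Fin n → ℕ)))
          (le_of_eq (val_eq_order hc).symm))
        (HahnSeries.orderTop_single_le (a := ∑ j, ((i j - Kp j : ℕ) : ℚ) * b j)
          (r := ∏ j, γ j ^ (i j - Kp j)))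
    · push_neg at hge
      obtain ⟨j, hj⟩ := hge
      rw [Kap.chi_eq_zero ⟨j, hj⟩]
      simp
  have hcc0 : (Kap.cc f (Kp : Fin n → ℕ) x₁).coeff t₀ = pc (f.coeff Kp) := by
    rw [hccexp, KapAux.coeff_sum, Finset.sum_congr rfl hcccoeff, Finset.sum_ite_eq' _ Kp]
    rw [if_pos hKpsupp]
  have hccne : Kap.cc f (Kp : Fin n → ℕ) x₁ ≠ 0 :=
    HahnSeries.ne_zero_of_coeff_ne_zero (hcc0 ▸ pc_ne_zero hKpc)
  have hccord : (Kap.cc f (Kp : Fin n → ℕ) x₁).order = t₀ := by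
    have h1 : ((t₀ : ℚ) : WithTop ℚ) ≤ (Kap.cc f (Kp : Fin n → ℕ) x₁).orderTop := by
      rw [hccexp]
      exact val_sum_ge _ _ _ hccval
    have h2 : (Kap.cc f (Kp : Fin n → ℕ) x₁).orderTop ≤ ((t₀ : ℚ) : WithTop ℚ) :=
      HahnSeries.orderTop_le_of_coeff_ne_zero (hcc0 ▸ pc_ne_zero hKpc)
    have h3 := le_antisymm h2 h1
    rw [val_eq_order hccne] at h3
    exact_mod_cast h3
  have hKpScand : (Kp : Fin n → ℕ) ∈ Kap.Scand f x₁ :=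
    Finset.mem_filter.2 ⟨Kap.supp_mem_box hKpsupp, hKp0, hccne⟩
  have hepspos : 0 < Kap.eps f b x₁ := by
    refine lt_of_lt_of_le ?_ (Kap.eps_ge f b x₁ hKpScand)
    rw [Kap.slope, hccord, ht₀]
    have htotpos : (0 : ℚ) < ((Kap.tot (Kp : Fin n → ℕ) : ℕ) : ℚ) := by
      exact_mod_cast Kap.tot_pos hKp0
    apply div_pos _ htotpos
    linarith
  -- run the Zorn-Newton machine
  obtain ⟨y, hyrel, hyroot⟩ := Kap.exists_root f b hS x₁
  rcases hyrel with heq | ⟨hV, hd⟩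
  · rw [← heq] at hyroot
    exact absurd hyroot h₁
  have hyj : ∀ j, y j ≠ 0 ∧ (y j).order = b j ∧ pc (y j) = γ j := by
    intro j
    have hblt : b j < b j + Kap.eps f b x₁ := by linarith
    have h1 : ((b j : ℚ) : WithTop ℚ) < (y j - x₁ j).orderTop :=
      lt_of_lt_of_le (by exact_mod_cast hblt) (hd j)
    have h2 := Kap.order_pc_of_single_add (hγ j) h1
    have hy : HahnSeries.single (b j) (γ j) + (y j - x₁ j) = y j := by
      rw [hx₁]; ring
    rw [hy] at h2
    exact h2
  exact ⟨y, fun j => (hyj j).1, hyroot, fun j => (hyj j).2.1, fun j => (hyj j).2.2⟩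

end Main
/-- Extended Kapranov theorem (multivariate Newton–Puiseux lifting): given
`γ ∈ (ℂ*)ⁿ` and `b ∈ ℚⁿ`, the nonzero polynomial `f` has a root
`x ∈ (K*)ⁿ` with `o(x_j) = b_j` and `pc(x_j) = γ_j` if and only if
`b ∈ 𝒯(f)` and `f̃_b(γ) = 0`. -/
theorem extended_kapranov (n : ℕ) (f : MvPolynomial (Fin n) K) (hf : f ≠ 0)
    (γ : Fin n → ℂ) (hγ : ∀ j, γ j ≠ 0) (b : Fin n → ℚ) :
    (∃ x : Fin n → K, (∀ j, x j ≠ 0) ∧ MvPolynomial.eval x f = 0 ∧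
        (∀ j, (x j).order = b j) ∧ ∀ j, pc (x j) = γ j) ↔
      b ∈ tropSet f ∧ MvPolynomial.eval γ (initForm f b) = 0 := by
  constructor
  · rintro ⟨x, hx0, hxf, hxo, hxp⟩
    exact extended_kapranov_forward n f hf γ hγ b x hx0 hxf hxo hxp
  · rintro ⟨hb, h0⟩
    exact extended_kapranov_backward n f γ hγ b hb h0
end
end
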